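/- arXiv:1508.07896 — 4 statements merged into one kernel-verified Lean document; each statement's English description precedes it below -/
import Mathlib

section
/- For all real a, β, α with 1 < a ≤ e, 0 ≤ β < 1 and α > 0, the series Σ_{k=0}^∞ ω_{β,a}(k,α) converges and its sum equals 1; that is, Σ_{k=0}^∞ α·(log a)^k·(α+kβ)^{k−1}·a^{−(α+kβ)}/k! = 1. -/
/-- `ω_{β,a}(k,α) = α (log a)^k (α+kβ)^{k-1} a^{-(α+kβ)} / k!`
(the exponent `k-1` is taken in `ℤ`, so that for `k = 0` this equals `a^{-α}`). -/
noncomputable def omegaW (β a α : ℝ) (k : ℕ) : ℝ :=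
  α * Real.log a ^ k * (α + (k : ℝ) * β) ^ ((k : ℤ) - 1) *
    a ^ (-(α + (k : ℝ) * β)) / (Nat.factorial k : ℝ)

noncomputable def rterm (r μ : ℝ) (k : ℕ) : ℝ :=
  r * (r + (k:ℝ) * μ) ^ ((k : ℤ) - 1) * Real.exp (-(r + (k:ℝ) * μ)) / (Nat.factorial k : ℝ)

noncomputable def cterm (r : ℝ) (μ : ℂ) (k : ℕ) : ℂ :=
  (r:ℂ) * ((r:ℂ) + (k:ℂ) * μ) ^ ((k : ℤ) - 1) * Complex.exp (-((r:ℂ) + (k:ℂ) * μ)) / (Nat.factorial k : ℂ)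

lemma exp_tsum (x : ℝ) : ∑' n : ℕ, x ^ n / (Nat.factorial n : ℝ) = Real.exp x := by
  rw [Real.exp_eq_exp_ℝ, NormedSpace.exp_eq_tsum_div]

lemma cterm_ofReal (r μ : ℝ) (k : ℕ) : cterm r (μ : ℂ) k = ((rterm r μ k : ℝ) : ℂ) := by
  simp only [cterm, rterm]
  push_cast
  rfl

lemma pow_div_fact_le (k : ℕ) {x : ℝ} (hx : 0 ≤ x) : x ^ k / (Nat.factorial k : ℝ) ≤ Real.exp x := by
  have h := Real.sum_le_exp_of_nonneg hx (k+1)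
  refine le_trans ?_ h
  have : x ^ k / (Nat.factorial k : ℝ) = ∑ i ∈ {k}, x ^ i / (Nat.factorial i : ℝ) := by simp
  rw [this]
  apply Finset.sum_le_sum_of_subset_of_nonneg
  · intro i hi; simp at hi; simp [hi, Finset.mem_range]
  · intro i _ _
    positivity

lemma h_mono {x y : ℝ} (hx : 0 ≤ x) (hxy : x ≤ y) (hy : y ≤ 1) :
    x * Real.exp (1 - x) ≤ y * Real.exp (1 - y) := by
  have h1 : Real.exp (1 - y) = Real.exp (1 - x) * Real.exp (x - y) := by
    rw [← Real.exp_add]; ring_nf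
  have h2 : (x - y) + 1 ≤ Real.exp (x - y) := Real.add_one_le_exp _
  have h3 : (0:ℝ) < Real.exp (1 - x) := Real.exp_pos _
  have hy0 : 0 ≤ y := hx.trans hxy
  have h5 : y * Real.exp (1-x) * (x - y + 1) ≤ y * Real.exp (1-x) * Real.exp (x-y) :=
    mul_le_mul_of_nonneg_left h2 (by positivity)
  have h6 : 0 ≤ (y - x) * (1 - y) * Real.exp (1-x) := by
    have := sub_nonneg.2 hxy; have := sub_nonneg.2 hy; positivity
  rw [h1]
  nlinarith [Real.exp_pos (x - y)]

lemma h_lt_one {x : ℝ} (hx : 0 < x) (hx1 : x < 1) : x * Real.exp (1 - x) < 1 := by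
  have h2 : (x - 1) + 1 < Real.exp (x - 1) := Real.add_one_lt_exp (by linarith)
  have h4 : Real.exp (1 - x) * Real.exp (x - 1) = 1 := by
    rw [← Real.exp_add]; ring_nf; exact Real.exp_zero
  nlinarith [Real.exp_pos (1 - x), Real.exp_pos (x - 1)]

lemma norm_cterm_le (r : ℝ) (hr : 0 < r) (μ : ℂ) (hre : 0 < μ.re) (k : ℕ) :
    ‖cterm r μ k‖ ≤ max (Real.exp (-r)) (r * Real.exp (r / ‖μ‖) / ‖μ‖) *
      (‖μ‖ * Real.exp (1 - μ.re)) ^ k := by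
  have hμ : 0 < ‖μ‖ := lt_of_lt_of_le hre (Complex.re_le_norm μ)
  match k with
  | 0 =>
    have hrne : (r:ℂ) ≠ 0 := by exact_mod_cast hr.ne'
    have : cterm r μ 0 = Complex.exp (-((r:ℂ))) := by
      simp only [cterm, Nat.cast_zero, zero_mul, add_zero, Nat.factorial_zero, Nat.cast_one,
        div_one, zero_sub, zpow_neg, zpow_one]
      rw [mul_comm ((r:ℂ)) _, inv_mul_cancel₀ hrne, one_mul]
    rw [this]
    simp only [pow_zero, mul_one]
    rw [Complex.norm_exp]
    simp only [Complex.neg_re, Complex.ofReal_re]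
    exact le_max_left _ _
  | (k+1) =>
    have hrne : (r:ℂ) ≠ 0 := by exact_mod_cast hr.ne'
    set n := k + 1 with hn
    set A := ‖μ‖ with hA
    set x := μ.re with hx
    set B := ‖(r:ℂ) + (n:ℂ) * μ‖ with hB
    have hn0 : (0:ℝ) < (n:ℝ) := by positivity
    have hnorm : ‖cterm r μ n‖
        = r * B ^ k * (Real.exp (-r) * Real.exp (-((n:ℝ) * x))) / (Nat.factorial n : ℝ) := by
      have hz : ((n:ℕ):ℤ) - 1 = (k : ℤ) := by push_cast [hn]; ring
      simp only [cterm, hz, zpow_natCast]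
      rw [norm_div, norm_mul, norm_mul,
        Complex.norm_exp, Complex.norm_real, norm_pow, Real.norm_eq_abs,
        abs_of_pos hr]
      have hre : (-((r:ℂ) + (n:ℂ) * μ)).re = -r + -((n:ℝ) * x) := by
        simp [Complex.add_re, Complex.mul_re]
        rw [← hx]; ring
      rw [hre, Real.exp_add]
      norm_num
      rfl
    have e1 : B ≤ r + (n:ℝ) * A := by
      calc B ≤ ‖(r:ℂ)‖ + ‖(n:ℂ) * μ‖ := norm_add_le _ _
        _ = r + (n:ℝ) * A := by
            rw [norm_mul, Complex.norm_real, Complex.norm_natCast, Real.norm_eq_abs, abs_of_pos hr]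
    have e2 : (r + (n:ℝ) * A) ^ k ≤ ((n:ℝ) * A) ^ k * Real.exp (r / A) := by
      have hsplit : r + (n:ℝ) * A = ((n:ℝ) * A) * (1 + r / ((n:ℝ) * A)) := by
        field_simp; ring
      rw [hsplit, mul_pow]
      have h1 : (1 + r / ((n:ℝ) * A)) ^ k ≤ Real.exp (r / ((n:ℝ) * A)) ^ k := by
        apply pow_le_pow_left₀ (by positivity)
        have := Real.add_one_le_exp (r / ((n:ℝ) * A))
        linarith
      have h2 : Real.exp (r / ((n:ℝ) * A)) ^ k ≤ Real.exp (r / A) := by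
        rw [← Real.exp_nat_mul]
        apply Real.exp_le_exp.2
        rw [le_div_iff₀ hμ]
        have hkn : (k:ℝ) ≤ (n:ℝ) := by exact_mod_cast Nat.le_succ k
        have : (k:ℝ) * r * A ≤ (n:ℝ) * r * A := by
          apply mul_le_mul_of_nonneg_right (mul_le_mul_of_nonneg_right hkn hr.le) hμ.le
        calc (k:ℝ) * (r / ((n:ℝ) * A)) * A = (k:ℝ) * r * A / ((n:ℝ) * A) := by ring
          _ ≤ (n:ℝ) * r * A / ((n:ℝ) * A) := by gcongr
          _ = r := by field_simp
      calc ((n:ℝ)*A)^k * (1 + r / ((n:ℝ)*A))^k ≤ ((n:ℝ)*A)^k * Real.exp (r / ((n:ℝ)*A)) ^ k := by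
            apply mul_le_mul_of_nonneg_left h1 (by positivity)
        _ ≤ ((n:ℝ)*A)^k * Real.exp (r / A) := mul_le_mul_of_nonneg_left h2 (by positivity)
    have e12 : B ^ k ≤ ((n:ℝ) * A) ^ k * Real.exp (r / A) :=
      (pow_le_pow_left₀ (norm_nonneg _) e1 k).trans e2
    have e3 : ((n:ℝ)) ^ k / (Nat.factorial n : ℝ) ≤ Real.exp (n:ℝ) := by
      have base : ((n:ℝ)) ^ n / (Nat.factorial n : ℝ) ≤ Real.exp (n:ℝ) :=
        pow_div_fact_le n (by positivity)
      have : ((n:ℝ)) ^ k ≤ ((n:ℝ)) ^ n := by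
        apply pow_le_pow_right₀ (by exact_mod_cast Nat.one_le_iff_ne_zero.2 (by omega)) (Nat.le_succ k)
      calc ((n:ℝ))^k / (Nat.factorial n : ℝ) ≤ ((n:ℝ))^n / (Nat.factorial n : ℝ) := by gcongr
        _ ≤ Real.exp (n:ℝ) := base
    have hpow : (A * Real.exp (1 - x)) ^ n
        = A ^ n * (Real.exp (n:ℝ) * Real.exp (-((n:ℝ) * x))) := by
      rw [mul_pow, ← Real.exp_nat_mul]
      have : (n:ℝ) * (1 - x) = (n:ℝ) + -((n:ℝ) * x) := by ring
      rw [this, Real.exp_add]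
    rw [hnorm]
    calc r * B ^ k * (Real.exp (-r) * Real.exp (-((n:ℝ) * x))) / (Nat.factorial n : ℝ)
        ≤ r * (((n:ℝ) * A) ^ k * Real.exp (r / A)) * (Real.exp (-r) * Real.exp (-((n:ℝ) * x)))
            / (Nat.factorial n : ℝ) := by gcongr
      _ = (r * Real.exp (r / A) / A) * (((n:ℝ)) ^ k / (Nat.factorial n : ℝ))
            * (A ^ n * (Real.exp (-r) * Real.exp (-((n:ℝ) * x)))) := by
          rw [pow_succ]
          field_simp
          ring
      _ ≤ (r * Real.exp (r / A) / A) * Real.exp (n:ℝ)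
            * (A ^ n * (Real.exp (-r) * Real.exp (-((n:ℝ) * x)))) := by gcongr
      _ ≤ max (Real.exp (-r)) (r * Real.exp (r / A) / A) * Real.exp (n:ℝ)
            * (A ^ n * (1 * Real.exp (-((n:ℝ) * x)))) := by
          gcongr
          · exact le_max_right _ _
          · exact Real.exp_le_one_iff.2 (by linarith)
      _ = max (Real.exp (-r)) (r * Real.exp (r / A) / A) * (A * Real.exp (1 - x)) ^ n := by
          rw [hpow]; ring

lemma c_bound (r μ : ℝ) (hr : 0 < r) (hμ : 0 < μ) (k : ℕ) :
    r * (r + (k:ℝ) * μ) ^ ((k:ℤ) - 1) / (Nat.factorial k : ℝ)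
      ≤ max 1 (r * Real.exp (r / μ) / μ) * (μ * Real.exp 1) ^ k := by
  match k with
  | 0 =>
    simp only [Nat.cast_zero, zero_mul, add_zero, Nat.factorial_zero, Nat.cast_one, div_one,
      zero_sub, zpow_neg, zpow_one, pow_zero, mul_one]
    rw [mul_inv_cancel₀ hr.ne']
    exact le_max_left _ _
  | (k+1) =>
    set n := k + 1 with hn
    have hn0 : (0:ℝ) < (n:ℝ) := by positivity
    have hz : ((n:ℕ):ℤ) - 1 = (k : ℤ) := by push_cast [hn]; ring
    rw [hz, zpow_natCast]
    have e2 : (r + (n:ℝ) * μ) ^ k ≤ ((n:ℝ) * μ) ^ k * Real.exp (r / μ) := by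
      have hsplit : r + (n:ℝ) * μ = ((n:ℝ) * μ) * (1 + r / ((n:ℝ) * μ)) := by
        field_simp; ring
      rw [hsplit, mul_pow]
      have h1 : (1 + r / ((n:ℝ) * μ)) ^ k ≤ Real.exp (r / ((n:ℝ) * μ)) ^ k := by
        apply pow_le_pow_left₀ (by positivity)
        have := Real.add_one_le_exp (r / ((n:ℝ) * μ))
        linarith
      have h2 : Real.exp (r / ((n:ℝ) * μ)) ^ k ≤ Real.exp (r / μ) := by
        rw [← Real.exp_nat_mul]
        apply Real.exp_le_exp.2
        rw [le_div_iff₀ hμ]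
        have hkn : (k:ℝ) ≤ (n:ℝ) := by exact_mod_cast Nat.le_succ k
        have hmono : (k:ℝ) * r * μ ≤ (n:ℝ) * r * μ :=
          mul_le_mul_of_nonneg_right (mul_le_mul_of_nonneg_right hkn hr.le) hμ.le
        calc (k:ℝ) * (r / ((n:ℝ) * μ)) * μ = (k:ℝ) * r * μ / ((n:ℝ) * μ) := by ring
          _ ≤ (n:ℝ) * r * μ / ((n:ℝ) * μ) := by gcongr
          _ = r := by field_simp
      calc ((n:ℝ)*μ)^k * (1 + r / ((n:ℝ)*μ))^k ≤ ((n:ℝ)*μ)^k * Real.exp (r / ((n:ℝ)*μ)) ^ k :=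
            mul_le_mul_of_nonneg_left h1 (by positivity)
        _ ≤ ((n:ℝ)*μ)^k * Real.exp (r / μ) := mul_le_mul_of_nonneg_left h2 (by positivity)
    have e3 : ((n:ℝ)) ^ k / (Nat.factorial n : ℝ) ≤ Real.exp (n:ℝ) := by
      have base : ((n:ℝ)) ^ n / (Nat.factorial n : ℝ) ≤ Real.exp (n:ℝ) :=
        pow_div_fact_le n (by positivity)
      have hp : ((n:ℝ)) ^ k ≤ ((n:ℝ)) ^ n :=
        pow_le_pow_right₀ (by exact_mod_cast Nat.one_le_iff_ne_zero.2 (by omega)) (Nat.le_succ k)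
      calc ((n:ℝ))^k / (Nat.factorial n : ℝ) ≤ ((n:ℝ))^n / (Nat.factorial n : ℝ) := by gcongr
        _ ≤ Real.exp (n:ℝ) := base
    have hexpn : Real.exp ((n:ℝ)) = Real.exp 1 ^ n := by
      rw [← Real.exp_nat_mul]; norm_num
    calc r * (r + (n:ℝ) * μ) ^ k / (Nat.factorial n : ℝ)
        ≤ r * (((n:ℝ) * μ) ^ k * Real.exp (r / μ)) / (Nat.factorial n : ℝ) := by gcongr
      _ = (r * Real.exp (r / μ) / μ) * (((n:ℝ)) ^ k / (Nat.factorial n : ℝ)) * μ ^ n := by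
          rw [mul_pow, pow_succ]
          field_simp
      _ ≤ (r * Real.exp (r / μ) / μ) * Real.exp ((n:ℝ)) * μ ^ n := by
          have h0 : (0:ℝ) ≤ r * Real.exp (r / μ) / μ := by positivity
          have := mul_le_mul_of_nonneg_left e3 h0
          apply mul_le_mul_of_nonneg_right this (by positivity)
      _ ≤ max 1 (r * Real.exp (r / μ) / μ) * (μ * Real.exp 1) ^ n := by
          rw [mul_pow, hexpn]
          have := le_max_right (1:ℝ) (r * Real.exp (r / μ) / μ)
          have hm : (0:ℝ) ≤ Real.exp 1 ^ n * μ ^ n := by positivity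
          nlinarith [pow_nonneg hμ.le n, pow_nonneg (Real.exp_pos 1).le n]

lemma summable_cterm (r : ℝ) (hr : 0 < r) (μ : ℂ) (hre : 0 < μ.re)
    (hq : ‖μ‖ * Real.exp (1 - μ.re) < 1) : Summable (cterm r μ) := by
  apply Summable.of_norm_bounded ?_ (norm_cterm_le r hr μ hre)
  exact (summable_geometric_of_lt_one (by positivity) hq).mul_left _

open Finset in
lemma altsum : ∀ (n : ℕ), ∀ j < n, ∑ k ∈ range (n+1), (-1:ℝ)^k * (n.choose k : ℝ) * (k:ℝ)^j = 0 := by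
  intro n
  induction n with
  | zero => intro j hj; omega
  | succ n ih =>
    intro j hj
    match j with
    | 0 =>
      have h2 : ∑ m ∈ range (n + 1 + 1), (-1:ℝ) ^ m * (((n+1).choose m : ℕ) : ℝ) = 0 := by
        exact_mod_cast Int.alternating_sum_range_choose_of_ne (Nat.succ_ne_zero n)
      simpa using h2
    | (j'+1) =>
      rw [Finset.sum_range_succ']
      have h0 : (-1:ℝ)^0 * ((n+1).choose 0 : ℝ) * ((0:ℕ):ℝ)^(j'+1) = 0 := by
        norm_num
      rw [h0, add_zero]
      have hterm : ∀ i ∈ range (n+1),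
          (-1:ℝ)^(i+1) * (((n+1).choose (i+1) : ℕ) : ℝ) * ((i+1:ℕ):ℝ)^(j'+1)
          = -((n:ℝ)+1) * ((-1:ℝ)^i * (n.choose i : ℝ) * ((i:ℝ)+1)^j') := by
        intro i _
        have hc : ((n+1).choose (i+1) * (i+1) : ℕ) = (n+1) * n.choose i := by
          simpa [Nat.succ_eq_add_one, mul_comm] using (Nat.add_one_mul_choose_eq n i).symm
        have hcR : (((n+1).choose (i+1) : ℕ) : ℝ) * ((i:ℝ)+1) = ((n:ℝ)+1) * (n.choose i : ℝ) := by
          have := congrArg (fun m : ℕ => (m : ℝ)) hc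
          push_cast at this ⊢
          linarith [this]
        have : ((i+1:ℕ):ℝ)^(j'+1) = ((i:ℝ)+1) * ((i:ℝ)+1)^j' := by
          push_cast; ring
        rw [this, pow_succ]
        linear_combination (-(-1:ℝ)^i * (((i:ℝ)+1)^j' : ℝ)) * hcR
      rw [Finset.sum_congr rfl hterm, ← Finset.mul_sum]
      have hz : ∑ i ∈ range (n+1), (-1:ℝ)^i * (n.choose i : ℝ) * ((i:ℝ)+1)^j' = 0 := by
        have hexp : ∀ i : ℕ, ((i:ℝ)+1)^j' = ∑ m ∈ range (j'+1), (i:ℝ)^m * (j'.choose m : ℝ) := by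
          intro i
          rw [add_pow]
          exact Finset.sum_congr rfl (by intro m _; ring)
        calc ∑ i ∈ range (n+1), (-1:ℝ)^i * (n.choose i : ℝ) * ((i:ℝ)+1)^j'
            = ∑ i ∈ range (n+1), ∑ m ∈ range (j'+1),
                (j'.choose m : ℝ) * ((-1:ℝ)^i * (n.choose i : ℝ) * (i:ℝ)^m) := by
              refine Finset.sum_congr rfl fun i _ => ?_
              rw [hexp i, Finset.mul_sum]
              exact Finset.sum_congr rfl fun m _ => by ring
          _ = ∑ m ∈ range (j'+1), (j'.choose m : ℝ) *
                ∑ i ∈ range (n+1), (-1:ℝ)^i * (n.choose i : ℝ) * (i:ℝ)^m := by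
              rw [Finset.sum_comm]
              exact Finset.sum_congr rfl fun m _ => by rw [Finset.mul_sum]
          _ = 0 := by
              refine Finset.sum_eq_zero fun m hm => ?_
              have hm' := Finset.mem_range.mp hm
              rw [ih m (by omega), mul_zero]
      rw [hz, mul_zero]

lemma small_sum8 (r μ : ℝ) (hr : 0 < r) (hμ0 : 0 < μ) (hμ8 : μ ≤ 1/8) :
    Summable (rterm r μ) ∧ ∑' k, rterm r μ k = 1 := by
  have hx : ∀ k : ℕ, (0:ℝ) < r + (k:ℝ) * μ := fun k => by positivity
  set c : ℕ → ℝ := fun k => r * (r + (k:ℝ) * μ) ^ ((k:ℤ) - 1) / (Nat.factorial k : ℝ) with hc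
  have hcpos : ∀ k, 0 < c k := by
    intro k
    have h1 : (0:ℝ) < (r + (k:ℝ) * μ) ^ ((k:ℤ) - 1) := zpow_pos (hx k) _
    have h2 : (0:ℝ) < (Nat.factorial k : ℝ) := by positivity
    simp only [hc]
    positivity
  set F : ℕ × ℕ → ℝ :=
    fun p => c p.1 * ((-(r + (p.1:ℝ) * μ)) ^ p.2 / (Nat.factorial p.2 : ℝ)) with hF
  have hFabs : ∀ p : ℕ × ℕ,
      |F p| = c p.1 * ((r + (p.1:ℝ) * μ) ^ p.2 / (Nat.factorial p.2 : ℝ)) := by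
    intro p
    rw [hF, abs_mul, abs_of_pos (hcpos _), abs_div, abs_pow, abs_neg, abs_of_pos (hx _),
      Nat.abs_cast]
  have hrow : ∀ k : ℕ, Summable (fun m => |F (k, m)|) := by
    intro k
    have : (fun m => |F (k, m)|) = fun m => c k * ((r + (k:ℝ) * μ) ^ m / (Nat.factorial m : ℝ)) := by
      funext m; exact hFabs (k, m)
    rw [this]
    exact (Real.summable_pow_div_factorial _).mul_left _
  have hrowsum : ∀ k : ℕ, ∑' m, |F (k, m)| = c k * Real.exp (r + (k:ℝ) * μ) := by
    intro k
    have : (fun m => |F (k, m)|) = fun m => c k * ((r + (k:ℝ) * μ) ^ m / (Nat.factorial m : ℝ)) := by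
      funext m; exact hFabs (k, m)
    rw [this, tsum_mul_left, exp_tsum]
  have hgeo : μ * Real.exp 2 < 1 := by
    have h1 : Real.exp 1 < 2.7182818286 := Real.exp_one_lt_d9
    have h2 : Real.exp 2 = Real.exp 1 * Real.exp 1 := by
      rw [← Real.exp_add]; norm_num
    nlinarith [Real.exp_pos 1]
  have habs : Summable (fun p : ℕ × ℕ => |F p|) := by
    apply (summable_prod_of_nonneg (fun p => abs_nonneg _)).2
    refine ⟨hrow, ?_⟩
    have hbd : ∀ k : ℕ, ∑' m, |F (k, m)|
        ≤ (max 1 (r * Real.exp (r / μ) / μ) * Real.exp r) * (μ * Real.exp 2) ^ k := by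
      intro k
      rw [hrowsum k]
      have h1 : c k ≤ max 1 (r * Real.exp (r / μ) / μ) * (μ * Real.exp 1) ^ k :=
        c_bound r μ hr hμ0 k
      have h2 : Real.exp (r + (k:ℝ) * μ) = Real.exp r * Real.exp μ ^ k := by
        rw [Real.exp_add, ← Real.exp_nat_mul]
      have h3 : (μ * Real.exp 1) ^ k * Real.exp μ ^ k ≤ (μ * Real.exp 2) ^ k := by
        rw [← mul_pow]
        apply pow_le_pow_left₀ (by positivity)
        have : Real.exp 1 * Real.exp μ = Real.exp (1 + μ) := (Real.exp_add 1 μ).symm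
        have hle : Real.exp (1 + μ) ≤ Real.exp 2 := Real.exp_le_exp.2 (by linarith)
        nlinarith [hμ0.le, Real.exp_pos (1+μ)]
      calc c k * Real.exp (r + (k:ℝ) * μ)
          ≤ (max 1 (r * Real.exp (r / μ) / μ) * (μ * Real.exp 1) ^ k) * Real.exp (r + (k:ℝ) * μ) := by
            apply mul_le_mul_of_nonneg_right h1 (Real.exp_pos _).le
        _ = (max 1 (r * Real.exp (r / μ) / μ) * Real.exp r) * ((μ * Real.exp 1) ^ k * Real.exp μ ^ k) := by
            rw [h2]; ring
        _ ≤ (max 1 (r * Real.exp (r / μ) / μ) * Real.exp r) * (μ * Real.exp 2) ^ k := by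
            apply mul_le_mul_of_nonneg_left h3 (by positivity)
    apply Summable.of_nonneg_of_le (fun k => tsum_nonneg (fun m => abs_nonneg _)) hbd
    exact (summable_geometric_of_lt_one (by positivity) hgeo).mul_left _
  have hFsummable : Summable F := habs.of_abs
  have hterm : ∀ k, rterm r μ k = ∑' m, F (k, m) := by
    intro k
    simp only [hF]
    rw [tsum_mul_left, exp_tsum]
    simp only [rterm, hc]
    ring
  have hsummable : Summable (rterm r μ) :=
    (hFsummable.prod).congr (fun k => (hterm k).symm)
  refine ⟨hsummable, ?_⟩
  have h1 : ∑' k, rterm r μ k = ∑' p : ℕ × ℕ, F p := by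
    rw [tsum_congr hterm, ← Summable.tsum_prod hFsummable]
  have h2 : ∑' p : ℕ × ℕ, F p = ∑' n : ℕ, ∑ p ∈ Finset.HasAntidiagonal.antidiagonal n, F p := by
    have hs : Summable (F ∘ Finset.HasAntidiagonal.sigmaAntidiagonalEquivProd) :=
      Finset.HasAntidiagonal.sigmaAntidiagonalEquivProd.summable_iff.2 hFsummable
    calc ∑' p : ℕ × ℕ, F p
        = ∑' σ : (Σ n : ℕ, Finset.HasAntidiagonal.antidiagonal n), (F ∘ Finset.HasAntidiagonal.sigmaAntidiagonalEquivProd) σ :=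
          (Finset.HasAntidiagonal.sigmaAntidiagonalEquivProd.tsum_eq F).symm
      _ = ∑' (n : ℕ) (p : Finset.HasAntidiagonal.antidiagonal n), (F ∘ Finset.HasAntidiagonal.sigmaAntidiagonalEquivProd) ⟨n, p⟩ :=
          Summable.tsum_sigma hs
      _ = ∑' n : ℕ, ∑ p ∈ Finset.HasAntidiagonal.antidiagonal n, F p := by
          refine tsum_congr fun n => ?_
          rw [← Finset.tsum_subtype]
          exact tsum_congr fun p => rfl
  have hD0 : ∑ p ∈ Finset.HasAntidiagonal.antidiagonal (0:ℕ), F p = 1 := by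
    rw [Finset.Nat.antidiagonal_zero, Finset.sum_singleton]
    simp only [hF, hc]
    norm_num
    rw [mul_inv_cancel₀ hr.ne']
  have hDn : ∀ n : ℕ, n ≠ 0 → ∑ p ∈ Finset.HasAntidiagonal.antidiagonal n, F p = 0 := by
    intro n hn
    obtain ⟨m, rfl⟩ : ∃ m, n = m + 1 := ⟨n - 1, by omega⟩
    rw [Finset.Nat.sum_antidiagonal_eq_sum_range_succ_mk]
    have hterm2 : ∀ k ∈ Finset.range (m + 2), F (k, m + 1 - k)
        = (r * (-1:ℝ)^(m+1) / (Nat.factorial (m+1) : ℝ)) *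
          ((-1:ℝ)^k * (((m+1).choose k : ℕ) : ℝ) * (r + (k:ℝ) * μ) ^ m) := by
      intro k hk
      have hkle : k ≤ m + 1 := by
        have := Finset.mem_range.mp hk; omega
      have hxne : r + (k:ℝ) * μ ≠ 0 := (hx k).ne'
      have hzp : (r + (k:ℝ) * μ) ^ ((k:ℤ) - 1) * (r + (k:ℝ) * μ) ^ (m + 1 - k)
          = (r + (k:ℝ) * μ) ^ m := by
        rw [← zpow_natCast (r + (k:ℝ) * μ) (m + 1 - k), ← zpow_add₀ hxne]
        rw [← zpow_natCast (r + (k:ℝ) * μ) m]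
        congr 1
        have : ((m + 1 - k : ℕ) : ℤ) = (m:ℤ) + 1 - (k:ℤ) := by
          omega
        rw [this]; ring
      have hsgn : (-1:ℝ) ^ (m + 1 - k) = (-1:ℝ)^(m+1) * (-1:ℝ)^k := by
        have h1 : (-1:ℝ) ^ (m + 1 - k) * (-1:ℝ)^k = (-1:ℝ)^(m+1) := by
          rw [← pow_add]
          congr 1
          omega
        have h2 : (-1:ℝ)^k * (-1:ℝ)^k = 1 := by
          rw [← pow_add, ← two_mul, pow_mul]
          norm_num
        calc (-1:ℝ) ^ (m + 1 - k) = (-1:ℝ) ^ (m + 1 - k) * ((-1:ℝ)^k * (-1:ℝ)^k) := by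
              rw [h2, mul_one]
          _ = (-1:ℝ)^(m+1) * (-1:ℝ)^k := by rw [← mul_assoc, h1]
      have hfac : (((m+1).choose k : ℕ) : ℝ) * (Nat.factorial k : ℝ) * (Nat.factorial (m+1-k) : ℝ)
          = (Nat.factorial (m+1) : ℝ) := by
        exact_mod_cast congrArg (fun x : ℕ => (x : ℝ)) (Nat.choose_mul_factorial_mul_factorial hkle)
      have hneg : (-(r + (k:ℝ) * μ)) ^ (m + 1 - k)
          = (-1:ℝ)^(m+1) * (-1:ℝ)^k * (r + (k:ℝ) * μ) ^ (m + 1 - k) := by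
        rw [neg_pow, hsgn]
      have hfk : (0:ℝ) < (Nat.factorial k : ℝ) := by positivity
      have hfmk : (0:ℝ) < (Nat.factorial (m+1-k) : ℝ) := by positivity
      have hfm1 : (0:ℝ) < (Nat.factorial (m+1) : ℝ) := by positivity
      have hinv : ((Nat.factorial k : ℝ) * (Nat.factorial (m+1-k) : ℝ))⁻¹
          = (((m+1).choose k : ℕ) : ℝ) / (Nat.factorial (m+1) : ℝ) := by
        rw [eq_div_iff hfm1.ne', ← hfac]
        field_simp
      have hnum : r * (r + (k:ℝ)*μ) ^ ((k:ℤ)-1) * ((-1:ℝ)^(m+1) * (-1:ℝ)^k * (r + (k:ℝ)*μ) ^ (m+1-k))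
          = r * (-1:ℝ)^(m+1) * ((-1:ℝ)^k * (r + (k:ℝ)*μ)^m) := by
        calc r * (r + (k:ℝ)*μ) ^ ((k:ℤ)-1) * ((-1:ℝ)^(m+1) * (-1:ℝ)^k * (r + (k:ℝ)*μ) ^ (m+1-k))
            = (r * (-1:ℝ)^(m+1) * (-1:ℝ)^k) *
              ((r + (k:ℝ)*μ) ^ ((k:ℤ)-1) * (r + (k:ℝ)*μ) ^ (m+1-k)) := by ring
          _ = r * (-1:ℝ)^(m+1) * ((-1:ℝ)^k * (r + (k:ℝ)*μ)^m) := by rw [hzp]; ring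
      simp only [hF, hc]
      rw [hneg, div_mul_div_comm, hnum, div_eq_mul_inv, hinv]
      ring
    rw [Finset.sum_congr rfl hterm2, ← Finset.mul_sum]
    have hzero : ∑ k ∈ Finset.range (m+2),
        (-1:ℝ)^k * (((m+1).choose k : ℕ) : ℝ) * (r + (k:ℝ)*μ)^m = 0 := by
      have hexp : ∀ k : ℕ, (r + (k:ℝ)*μ)^m
          = ∑ j ∈ Finset.range (m+1), ((k:ℝ)*μ)^j * r^(m-j) * ((m.choose j : ℕ) : ℝ) := by
        intro k
        rw [add_comm, add_pow]
      calc ∑ k ∈ Finset.range (m+2), (-1:ℝ)^k * (((m+1).choose k : ℕ) : ℝ) * (r + (k:ℝ)*μ)^m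
          = ∑ k ∈ Finset.range (m+2), ∑ j ∈ Finset.range (m+1),
              (μ^j * r^(m-j) * ((m.choose j : ℕ) : ℝ)) *
                ((-1:ℝ)^k * (((m+1).choose k : ℕ) : ℝ) * (k:ℝ)^j) := by
            refine Finset.sum_congr rfl fun k _ => ?_
            rw [hexp k, Finset.mul_sum]
            refine Finset.sum_congr rfl fun j _ => ?_
            rw [mul_pow]; ring
        _ = ∑ j ∈ Finset.range (m+1), (μ^j * r^(m-j) * ((m.choose j : ℕ) : ℝ)) *
              ∑ k ∈ Finset.range (m+2), (-1:ℝ)^k * (((m+1).choose k : ℕ) : ℝ) * (k:ℝ)^j := by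
            rw [Finset.sum_comm]
            exact Finset.sum_congr rfl fun j _ => (Finset.mul_sum _ _ _).symm
        _ = 0 := by
            refine Finset.sum_eq_zero fun j hj => ?_
            rw [altsum (m+1) j (Finset.mem_range.mp hj), mul_zero]
    rw [hzero, mul_zero]
  rw [h1, h2, tsum_eq_single 0 hDn, hD0]

lemma diff_cterm (r : ℝ) (k : ℕ) : Differentiable ℂ (fun z => cterm r z k) := by
  match k with
  | 0 =>
    have : (fun z : ℂ => cterm r z 0) = fun _ : ℂ =>
        (r:ℂ) * ((r:ℂ)) ^ ((0:ℤ) - 1) * Complex.exp (-((r:ℂ))) / ((1:ℕ) : ℂ) := by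
      funext z
      simp [cterm]
    rw [this]
    exact differentiable_const _
  | (k+1) =>
    have hz : (((k+1:ℕ)):ℤ) - 1 = (k : ℤ) := by push_cast; ring
    have : (fun z : ℂ => cterm r z (k+1)) = fun z : ℂ =>
        (r:ℂ) * ((r:ℂ) + ((k+1:ℕ):ℂ) * z) ^ (k:ℕ) * Complex.exp (-((r:ℂ) + ((k+1:ℕ):ℂ) * z))
          / ((Nat.factorial (k+1) : ℕ) : ℂ) := by
      funext z
      rw [cterm, hz, zpow_natCast]
    rw [this]
    apply Differentiable.div_const
    apply Differentiable.mul
    · apply Differentiable.mul (differentiable_const _)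
      exact (differentiable_const _ |>.add ((differentiable_const _).mul differentiable_id)).pow _
    · exact ((differentiable_const _ |>.add ((differentiable_const _).mul differentiable_id)).neg).cexp

lemma key (r μ : ℝ) (hr : 0 < r) (hμ0 : 0 < μ) (hμ1 : μ < 1) :
    Summable (rterm r μ) ∧ ∑' k, rterm r μ k = 1 := by
  have hε0 : 0 < min μ (1/8) / 2 := by
    have : (0:ℝ) < min μ (1/8) := lt_min hμ0 (by norm_num)
    linarith
  set ε : ℝ := min μ (1/8) / 2 with hεdef
  set q₀ : ℝ := (max (μ * Real.exp (1-μ)) ((1/8) * Real.exp (1-1/8)) + 1) / 2 with hq₀def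
  have hmax1 : max (μ * Real.exp (1-μ)) ((1/8) * Real.exp (1-1/8)) < 1 :=
    max_lt (h_lt_one hμ0 hμ1) (h_lt_one (by norm_num) (by norm_num))
  have hq₀1 : q₀ < 1 := by rw [hq₀def]; linarith
  have hq₀μ : μ * Real.exp (1-μ) < q₀ := by
    rw [hq₀def]
    have := le_max_left (μ * Real.exp (1-μ)) ((1/8) * Real.exp (1-1/8))
    linarith
  have hq₀8 : (1/8:ℝ) * Real.exp (1-1/8) < q₀ := by
    rw [hq₀def]
    have := le_max_right (μ * Real.exp (1-μ)) ((1/8) * Real.exp (1-1/8))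
    linarith
  have hq₀0 : 0 < q₀ := by
    rw [hq₀def]
    have : (0:ℝ) ≤ max (μ * Real.exp (1-μ)) ((1/8) * Real.exp (1-1/8)) :=
      le_trans (by positivity) (le_max_left _ _)
    linarith
  set U : Set ℂ := {z : ℂ | ε < z.re ∧ z.re < 1 ∧ ‖z‖ * Real.exp (1 - z.re) < q₀}
    with hUdef
  have hUopen : IsOpen U := by
    rw [hUdef]
    have h1 : IsOpen {z : ℂ | ε < z.re} := isOpen_lt continuous_const Complex.continuous_re
    have h2 : IsOpen {z : ℂ | z.re < 1} := isOpen_lt Complex.continuous_re continuous_const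
    have h3 : IsOpen {z : ℂ | ‖z‖ * Real.exp (1 - z.re) < q₀} :=
      isOpen_lt (continuous_norm.mul ((continuous_const.sub Complex.continuous_re).rexp))
        continuous_const
    exact h1.inter (h2.inter h3)
  have hrealU : ∀ x : ℝ, ε < x → x < 1 → x * Real.exp (1-x) < q₀ → (x:ℂ) ∈ U := by
    intro x h1 h2 h3
    have hx0 : 0 < x := lt_trans hε0 h1
    refine ⟨by simpa using h1, by simpa using h2, ?_⟩
    simpa [Complex.norm_real, Real.norm_eq_abs, abs_of_pos hx0] using h3
  have hεμ : ε < μ := by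
    rw [hεdef]
    have : min μ (1/8) ≤ μ := min_le_left _ _
    linarith [lt_min hμ0 (show (0:ℝ) < 1/8 by norm_num)]
  have hε8 : ε < 1/8 := by
    rw [hεdef]
    have : min μ (1/8) ≤ 1/8 := min_le_right _ _
    linarith [lt_min hμ0 (show (0:ℝ) < 1/8 by norm_num)]
  have hμU : (μ:ℂ) ∈ U := hrealU μ hεμ hμ1 hq₀μ
  have h8U : ((1/8:ℝ):ℂ) ∈ U := hrealU _ hε8 (by norm_num) hq₀8
  have hUconn : IsPreconnected U := by
    apply isPreconnected_of_forall (((1/8:ℝ):ℂ))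
    intro y hy
    obtain ⟨hy1, hy2, hy3⟩ := hy
    have hyre0 : 0 < y.re := lt_trans hε0 hy1
    refine ⟨segment ℝ y ((y.re:ℝ):ℂ) ∪ segment ℝ ((y.re:ℝ):ℂ) ((1/8:ℝ):ℂ), ?_, ?_, ?_, ?_⟩
    · -- subset of U
      rintro z (hz | hz)
      · -- vertical segment
        obtain ⟨u, v, hu, hv, huv, rfl⟩ := hz
        have hre : (u • y + v • ((y.re:ℝ):ℂ)).re = y.re := by
          simp only [Complex.add_re, Complex.smul_re, Complex.ofReal_re, smul_eq_mul]
          rw [← add_mul, huv, one_mul]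
        have habs : ‖u • y + v • ((y.re:ℝ):ℂ)‖ ≤ ‖y‖ := by
          calc ‖u • y + v • ((y.re:ℝ):ℂ)‖
              ≤ ‖u • y‖ + ‖v • ((y.re:ℝ):ℂ)‖ :=
                norm_add_le _ _
            _ = u * ‖y‖ + v * |y.re| := by
                simp only [Complex.real_smul, norm_mul, Complex.norm_real, Real.norm_eq_abs,
                  abs_of_nonneg hu, abs_of_nonneg hv]
            _ ≤ u * ‖y‖ + v * ‖y‖ := by
                have h := Complex.abs_re_le_norm y
                have := mul_le_mul_of_nonneg_left h hv
                linarith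
            _ = ‖y‖ := by rw [← add_mul, huv, one_mul]
        refine ⟨by rw [hre]; exact hy1, by rw [hre]; exact hy2, ?_⟩
        rw [hre]
        calc ‖u • y + v • ((y.re:ℝ):ℂ)‖ * Real.exp (1 - y.re)
            ≤ ‖y‖ * Real.exp (1 - y.re) := by
              apply mul_le_mul_of_nonneg_right habs (Real.exp_pos _).le
          _ < q₀ := hy3
      · -- horizontal real segment
        obtain ⟨u, v, hu, hv, huv, rfl⟩ := hz
        obtain ⟨x, hxdef⟩ : ∃ x : ℝ, x = u * y.re + v * (1/8) := ⟨_, rfl⟩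
        have hzeq : u • ((y.re:ℝ):ℂ) + v • ((1/8:ℝ):ℂ) = ((x:ℝ):ℂ) := by
          rw [hxdef]
          push_cast
          rw [Complex.real_smul, Complex.real_smul]
        rw [hzeq]
        obtain ⟨M, hMdef⟩ : ∃ M : ℝ, M = max y.re (1/8) := ⟨_, rfl⟩
        have hyM : y.re ≤ M := hMdef ▸ le_max_left _ _
        have h8M : (1/8:ℝ) ≤ M := hMdef ▸ le_max_right _ _
        have hminx : min y.re (1/8) ≤ x := by
          have h1 : 0 ≤ u * (y.re - min y.re (1/8)) :=
            mul_nonneg hu (sub_nonneg.2 (min_le_left _ _))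
          have h2 : 0 ≤ v * ((1/8) - min y.re (1/8)) :=
            mul_nonneg hv (sub_nonneg.2 (min_le_right _ _))
          have hkey : x - min y.re (1/8)
              = u * (y.re - min y.re (1/8)) + v * ((1/8) - min y.re (1/8)) := by
            rw [hxdef]
            linear_combination (min y.re (1/8:ℝ)) * huv
          linarith
        have hxM : x ≤ M := by
          have h1 : 0 ≤ u * (M - y.re) := mul_nonneg hu (sub_nonneg.2 hyM)
          have h2 : 0 ≤ v * (M - 1/8) := mul_nonneg hv (sub_nonneg.2 h8M)
          have hkey : M - x = u * (M - y.re) + v * (M - 1/8) := by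
            rw [hxdef]
            linear_combination (-M) * huv
          linarith
        have hM1' : M < 1 := hMdef ▸ max_lt hy2 (by norm_num)
        have hεx : ε < x := lt_of_lt_of_le (lt_min hy1 hε8) hminx
        have hx1 : x < 1 := lt_of_le_of_lt hxM hM1'
        have hx0 : 0 < x := lt_trans hε0 hεx
        refine hrealU x hεx hx1 ?_
        have hM1 : M ≤ 1 := hM1'.le
        have hMq : M * Real.exp (1 - M) < q₀ := by
          rcases max_choice y.re (1/8) with hM | hM
          · rw [hMdef, hM]
            calc y.re * Real.exp (1 - y.re) ≤ ‖y‖ * Real.exp (1 - y.re) := by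
                  apply mul_le_mul_of_nonneg_right (Complex.re_le_norm y) (Real.exp_pos _).le
              _ < q₀ := hy3
          · rw [hMdef, hM]
            exact hq₀8
        calc x * Real.exp (1 - x) ≤ M * Real.exp (1 - M) := h_mono hx0.le hxM hM1
          _ < q₀ := hMq
    · exact Or.inr (right_mem_segment _ _ _)
    · exact Or.inl (left_mem_segment _ _ _)
    · apply IsPreconnected.union ((y.re:ℝ):ℂ)
      · exact right_mem_segment _ _ _
      · exact left_mem_segment _ _ _
      · exact (convex_segment _ _).isPreconnected
      · exact (convex_segment _ _).isPreconnected
  -- analyticity of the sum on U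
  have hloc : TendstoLocallyUniformlyOn
      (fun (s : Finset ℕ) (z : ℂ) => ∑ k ∈ s, cterm r z k)
      (fun z => ∑' k, cterm r z k) Filter.atTop U := by
    rw [tendstoLocallyUniformlyOn_iff_forall_isCompact hUopen]
    intro K hKU hK
    rcases K.eq_empty_or_nonempty with rfl | hKne
    · exact tendstoUniformlyOn_empty
    have hqcont : Continuous fun z : ℂ => ‖z‖ * Real.exp (1 - z.re) :=
      continuous_norm.mul ((continuous_const.sub Complex.continuous_re).rexp)
    obtain ⟨z₀, hz₀K, hz₀⟩ := hK.exists_isMaxOn hKne hqcont.continuousOn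
    obtain ⟨z₁, hz₁K, hz₁⟩ := hK.exists_isMinOn hKne Complex.continuous_re.continuousOn
    have hqK1 : ‖z₀‖ * Real.exp (1 - z₀.re) < 1 := lt_trans (hKU hz₀K).2.2 hq₀1
    have hqK0 : 0 ≤ ‖z₀‖ * Real.exp (1 - z₀.re) := by positivity
    have hεK : 0 < z₁.re := lt_trans hε0 (hKU hz₁K).1
    apply tendstoUniformlyOn_tsum
      (u := fun k => max (Real.exp (-r)) (r * Real.exp (r / z₁.re) / z₁.re) *
        (‖z₀‖ * Real.exp (1 - z₀.re)) ^ k)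
      ((summable_geometric_of_lt_one hqK0 hqK1).mul_left _)
    intro k z hz
    have hzre : 0 < z.re := lt_trans hε0 (hKU hz).1
    have hzA : z₁.re ≤ ‖z‖ := le_trans (hz₁ hz) (Complex.re_le_norm z)
    have hzA0 : 0 < ‖z‖ := lt_of_lt_of_le hεK hzA
    refine le_trans (norm_cterm_le r hr z hzre k) ?_
    have hM : max (Real.exp (-r)) (r * Real.exp (r / ‖z‖) / ‖z‖)
        ≤ max (Real.exp (-r)) (r * Real.exp (r / z₁.re) / z₁.re) := by
      apply max_le_max le_rfl
      have h1 : r / ‖z‖ ≤ r / z₁.re := by gcongr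
      have h2 : r * Real.exp (r / ‖z‖) ≤ r * Real.exp (r / z₁.re) :=
        mul_le_mul_of_nonneg_left (Real.exp_le_exp.2 h1) hr.le
      exact div_le_div₀ (by positivity) h2 hεK hzA
    have hqz : (‖z‖ * Real.exp (1 - z.re)) ^ k
        ≤ (‖z₀‖ * Real.exp (1 - z₀.re)) ^ k :=
      pow_le_pow_left₀ (by positivity) (hz₀ hz) k
    apply mul_le_mul hM hqz (by positivity)
      (le_trans (Real.exp_pos (-r)).le (le_max_left _ _))
  have hdiffOn : DifferentiableOn ℂ (fun z => ∑' k, cterm r z k) U := by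
    apply hloc.differentiableOn ?_ hUopen
    apply Filter.Eventually.of_forall
    intro s
    apply Differentiable.differentiableOn
    apply Differentiable.fun_sum
    intro k _
    exact diff_cterm r k
  have hanal : AnalyticOnNhd ℂ (fun z => ∑' k, cterm r z k) U := hdiffOn.analyticOnNhd hUopen
  -- value 1 near small reals
  have hsmalleq : ∀ x : ℝ, 0 < x → x ≤ 1/8 → ∑' k, cterm r ((x:ℝ):ℂ) k = 1 := by
    intro x h1 h2
    obtain ⟨hs, hsum⟩ := small_sum8 r x hr h1 h2
    have heq : ∑' k, cterm r ((x:ℝ):ℂ) k = ((∑' k, rterm r x k : ℝ) : ℂ) := by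
      rw [Complex.ofReal_tsum]
      exact tsum_congr fun k => cterm_ofReal r x k
    rw [heq, hsum, Complex.ofReal_one]
  -- frequently equal to 1 near 1/8
  have hfreq : ∃ᶠ z in nhdsWithin ((1/8:ℝ):ℂ) {((1/8:ℝ):ℂ)}ᶜ,
      (fun z => ∑' k, cterm r z k) z = (fun _ => (1:ℂ)) z := by
    have hpos : ∀ n : ℕ, 0 < 1/8 - 1/((n:ℝ)+9) := by
      intro n
      have h9 : (9:ℝ) ≤ (n:ℝ) + 9 := by
        have := Nat.cast_nonneg (α := ℝ) n
        linarith
      have : 1/((n:ℝ)+9) ≤ 1/9 := by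
        apply div_le_div_of_nonneg_left (by norm_num) (by norm_num) h9
      linarith
    have hle : ∀ n : ℕ, 1/8 - 1/((n:ℝ)+9) ≤ 1/8 := by
      intro n
      have : 0 < 1/((n:ℝ)+9) := by positivity
      linarith
    have htend : Filter.Tendsto (fun n : ℕ => (((1/8 - 1/((n:ℝ)+9) : ℝ)):ℂ)) Filter.atTop
        (nhdsWithin ((1/8:ℝ):ℂ) {((1/8:ℝ):ℂ)}ᶜ) := by
      rw [tendsto_nhdsWithin_iff]
      constructor
      · have h9 : Filter.Tendsto (fun n : ℕ => ((n:ℝ)+9)) Filter.atTop Filter.atTop :=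
          Filter.tendsto_atTop_add_const_right _ 9 tendsto_natCast_atTop_atTop
        have hinv : Filter.Tendsto (fun n : ℕ => 1/((n:ℝ)+9)) Filter.atTop (nhds 0) := by
          simpa [one_div, Pi.inv_def] using h9.inv_tendsto_atTop
        have hreal : Filter.Tendsto (fun n : ℕ => (1/8 - 1/((n:ℝ)+9) : ℝ)) Filter.atTop
            (nhds (1/8 : ℝ)) := by
          have := Filter.Tendsto.sub (tendsto_const_nhds (x := (1/8:ℝ))) hinv
          simpa using this
        exact (Complex.continuous_ofReal.tendsto _).comp hreal
      · apply Filter.Eventually.of_forall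
        intro n
        simp only [Set.mem_compl_iff, Set.mem_singleton_iff]
        intro hcon
        have h := Complex.ofReal_inj.1 hcon
        have := hpos n
        have h0 : (0:ℝ) < 1/((n:ℝ)+9) := by positivity
        linarith
    apply htend.frequently
    apply Filter.Frequently.of_forall
    intro n
    exact hsmalleq _ (hpos n) (hle n)
  have heqOn : Set.EqOn (fun z => ∑' k, cterm r z k) (fun _ => (1:ℂ)) U :=
    hanal.eqOn_of_preconnected_of_frequently_eq analyticOnNhd_const hUconn h8U hfreq
  have hμval : ∑' k, cterm r ((μ:ℝ):ℂ) k = 1 := heqOn hμU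
  -- transfer to the reals
  have hqμ : ‖((μ:ℝ):ℂ)‖ * Real.exp (1 - ((μ:ℝ):ℂ).re) < 1 := by
    simpa [Complex.norm_real, Real.norm_eq_abs, abs_of_pos hμ0] using h_lt_one hμ0 hμ1
  have hsum_c : Summable (cterm r ((μ:ℝ):ℂ)) :=
    summable_cterm r hr _ (by simpa using hμ0) hqμ
  have hsum_r : Summable (rterm r μ) := by
    have h := hsum_c.congr (fun k => cterm_ofReal r μ k)
    exact Complex.summable_ofReal.1 h
  refine ⟨hsum_r, ?_⟩
  have hfin : ((∑' k, rterm r μ k : ℝ) : ℂ) = 1 := by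
    rw [Complex.ofReal_tsum, ← hμval]
    exact tsum_congr fun k => (cterm_ofReal r μ k).symm
  exact_mod_cast hfin

lemma omega_eq_rterm (a β α : ℝ) (ha₁ : 1 < a) (hα : 0 < α) (k : ℕ) :
    omegaW β a α k = rterm (α * Real.log a) (β * Real.log a) k := by
  have ht0 : 0 < Real.log a := Real.log_pos ha₁
  have ha0 : 0 < a := lt_trans one_pos ha₁
  match k with
  | 0 =>
    simp only [omegaW, rterm, Nat.cast_zero, zero_mul, add_zero, pow_zero,
      Nat.factorial_zero, Nat.cast_one, div_one, zero_sub, zpow_neg, zpow_one, one_mul, mul_one]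
    rw [Real.rpow_def_of_pos ha0]
    rw [mul_inv_cancel₀ hα.ne', mul_inv_cancel₀ (by positivity : (α * Real.log a) ≠ 0),
      one_mul, one_mul]
    congr 1
    ring
  | (k+1) =>
    have hz : (((k+1:ℕ)):ℤ) - 1 = (k:ℤ) := by push_cast; ring
    simp only [omegaW, rterm, hz, zpow_natCast]
    rw [Real.rpow_def_of_pos ha0]
    have h1 : Real.log a * (-(α + ((k+1:ℕ):ℝ)*β)) = -(α*Real.log a + ((k+1:ℕ):ℝ)*(β*Real.log a)) := by
      ring
    rw [h1]
    have h2 : α*Real.log a + ((k+1:ℕ):ℝ)*(β*Real.log a) = Real.log a * (α + ((k+1:ℕ):ℝ)*β) := by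
      ring
    rw [h2, mul_pow]
    ring

theorem omegaW_tsum_eq_one (a β α : ℝ) (ha₁ : 1 < a) (ha₂ : a ≤ Real.exp 1)
    (hβ₀ : 0 ≤ β) (hβ₁ : β < 1) (hα : 0 < α) :
    Summable (fun k : ℕ => omegaW β a α k) ∧
      ∑' k : ℕ, omegaW β a α k = 1 := by
  have ha0 : 0 < a := lt_trans one_pos ha₁
  have ht0 : 0 < Real.log a := Real.log_pos ha₁
  have ht1 : Real.log a ≤ 1 := by
    calc Real.log a ≤ Real.log (Real.exp 1) := Real.log_le_log ha0 ha₂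
      _ = 1 := Real.log_exp 1
  have hr : 0 < α * Real.log a := by positivity
  have hbridge : ∀ k, omegaW β a α k = rterm (α * Real.log a) (β * Real.log a) k :=
    omega_eq_rterm a β α ha₁ hα
  rcases eq_or_lt_of_le hβ₀ with hβ | hβ
  · -- β = 0
    have hβ0 : β = 0 := hβ.symm
    subst hβ0
    have hrne : α * Real.log a ≠ 0 := hr.ne'
    have hr0 : ∀ k, rterm (α * Real.log a) (0 * Real.log a) k
        = (α * Real.log a)^k / (Nat.factorial k : ℝ) * Real.exp (-(α * Real.log a)) := by
      intro k
      simp only [rterm, zero_mul, mul_zero, add_zero]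
      rw [show ((k:ℤ) - 1) = (k:ℤ) + (-1) by ring, zpow_add₀ hrne, zpow_natCast, zpow_neg_one]
      field_simp
    have hsumm : Summable (fun k => rterm (α * Real.log a) (0 * Real.log a) k) := by
      apply Summable.congr ((Real.summable_pow_div_factorial (α * Real.log a)).mul_right
        (Real.exp (-(α * Real.log a))))
      intro k
      exact (hr0 k).symm
    constructor
    · exact hsumm.congr fun k => (hbridge k).symm
    · rw [tsum_congr hbridge, tsum_congr hr0, tsum_mul_right, exp_tsum, ← Real.exp_add]
      simp
  · have hμ0 : 0 < β * Real.log a := by positivity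
    have hμ1 : β * Real.log a < 1 := by
      have h1 : β * Real.log a ≤ β := by nlinarith
      exact lt_of_le_of_lt h1 hβ₁
    obtain ⟨hs, hsum⟩ := key (α * Real.log a) (β * Real.log a) hr hμ0 hμ1
    constructor
    · exact hs.congr fun k => (hbridge k).symm
    · rw [tsum_congr hbridge, hsum]
end

section
/- For all real a, β, α with 1 < a ≤ e, 0 ≤ β < 1, α > 0, and every integer r ≥ 1, one has S(r,α,β,a) = Σ_{k=0}^∞ (β·log a)^k·(α+kβ)·S(r−1, α+kβ, β, a), where the series on the right converges. -/
open Finset in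
lemma telescopeA (x b : ℝ) : ∀ n : ℕ,
    ∑ j ∈ range (n+1), b^(n-j) * (x - b*j) * x^j / (Nat.factorial j : ℝ)
      = x^(n+1) / (Nat.factorial n : ℝ) := by
  intro n
  induction n with
  | zero => simp
  | succ n ih =>
    rw [Finset.sum_range_succ]
    have h1 : ∀ j ∈ range (n+1),
        b^(n+1-j) * (x - b*j) * x^j / (Nat.factorial j : ℝ)
          = b * (b^(n-j) * (x - b*j) * x^j / (Nat.factorial j : ℝ)) := by
      intro j hj
      rw [Finset.mem_range] at hj
      have : n + 1 - j = (n - j) + 1 := by omega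
      rw [this, pow_succ]
      ring
    rw [Finset.sum_congr rfl h1, ← Finset.mul_sum, ih]
    have hn : (Nat.factorial n : ℝ) ≠ 0 := Nat.cast_ne_zero.2 (Nat.factorial_ne_zero n)
    have hn1 : (Nat.factorial (n+1) : ℝ) ≠ 0 := Nat.cast_ne_zero.2 (Nat.factorial_ne_zero _)
    have hfac : (Nat.factorial (n+1) : ℝ) = (n+1) * Nat.factorial n := by
      rw [Nat.factorial_succ]; push_cast; ring
    rw [hfac]
    simp only [Nat.sub_self, pow_zero]
    field_simp
    push_cast
    ring

open Finset in
lemma telescopeB (α b : ℝ) (n : ℕ) :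
    ∑ k ∈ range (n+1), b^k * (α + b*k) * (α + b*n)^(n-k) / (Nat.factorial (n-k) : ℝ)
      = (α + b*n)^(n+1) / (Nat.factorial n : ℝ) := by
  set x := α + b*n with hx
  rw [← Finset.sum_range_reflect]
  rw [← telescopeA x b n]
  refine Finset.sum_congr rfl ?_
  intro j hj
  rw [Finset.mem_range] at hj
  have h1 : n - (n - j) = j := by omega
  have h2 : ((n - j : ℕ) : ℝ) = (n : ℝ) - j := by
    rw [Nat.cast_sub (by omega)]
  have h3 : n + 1 - 1 - j = n - j := by omega
  rw [h3, h1, h2, hx]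
  ring_nf

lemma g_summable (a β α : ℝ) (ha₁ : 1 < a) (ha₂ : a ≤ Real.exp 1)
    (hβ₀ : 0 ≤ β) (hβ₁ : β < 1) (hα : 0 < α) (s : ℕ) :
    Summable (fun n : ℕ => (1 / (Nat.factorial n : ℝ)) * Real.log a ^ n *
      (α + β * n) ^ (n + s) * a ^ (-(α + β * (n:ℝ)))) := by
  have ha0 : (0:ℝ) < a := lt_trans one_pos ha₁
  have hL0 : 0 < Real.log a := Real.log_pos ha₁
  have hL1 : Real.log a ≤ 1 := by
    have := Real.log_le_log ha0 ha₂
    rwa [Real.log_exp] at this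
  set L := Real.log a with hLdef
  have hx : ∀ n : ℕ, 0 < α + β * n := fun n => by positivity
  have hrpow : ∀ n : ℕ, a ^ (-(α + β * (n:ℝ))) = Real.exp (-(L * (α + β * n))) := by
    intro n
    rw [Real.rpow_def_of_pos ha0, ← hLdef]
    ring_nf
  have hnonneg : ∀ n : ℕ, 0 ≤ (1 / (Nat.factorial n : ℝ)) * L ^ n *
      (α + β * n) ^ (n + s) * a ^ (-(α + β * (n:ℝ))) := by
    intro n
    have := (hx n).le
    positivity
  rcases eq_or_lt_of_le hβ₀ with hβz | hβpos
  · have hsum := (Real.summable_pow_div_factorial (L * α)).mul_right (α ^ s * a ^ (-α : ℝ))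
    refine hsum.congr (fun n => ?_)
    rw [← hβz]
    simp only [zero_mul, add_zero]
    rw [pow_add, mul_pow]
    field_simp
  · have ht0 : 0 < β * L := mul_pos hβpos hL0
    have ht1 : β * L < 1 := lt_of_le_of_lt (by nlinarith) hβ₁
    set t := β * L with htdef
    set ρ := t * Real.exp (1 - t) with hρdef
    have hρ0 : 0 < ρ := mul_pos ht0 (Real.exp_pos _)
    have hρ1 : ρ < 1 := by
      have hlog : Real.log t < t - 1 := Real.log_lt_sub_one_of_pos ht0 (ne_of_lt ht1)
      calc ρ = Real.exp (Real.log t + (1 - t)) := by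
              rw [Real.exp_add, Real.exp_log ht0]
        _ < Real.exp 0 := Real.exp_lt_exp.2 (by linarith)
        _ = 1 := Real.exp_zero
    have hsum1 : Summable (fun n : ℕ => ((n:ℝ))^s * ρ^n) :=
      summable_pow_mul_geometric_of_norm_lt_one s
        (by rw [Real.norm_eq_abs, abs_of_pos hρ0]; exact hρ1)
    have hsum2 : Summable (fun n : ℕ => ((n:ℝ)+1)^s * ρ^n) := by
      have h1 := (summable_nat_add_iff 1).2 hsum1
      have h2 := h1.mul_left ρ⁻¹
      refine h2.congr (fun n => ?_)
      push_cast
      rw [pow_succ]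
      field_simp
    have hsum3 := (hsum2.mul_left (Real.exp ((1/t - 1) * L * α) * (α + β) ^ s))
    refine Summable.of_nonneg_of_le hnonneg (fun n => ?_) hsum3
    have hx0 : 0 < α + β * (n:ℝ) := hx n
    set x := α + β * (n:ℝ) with hxdef
    have key : (L * x)^n / (Nat.factorial n : ℝ) ≤ Real.exp ((1/t) * (L * x)) * t^n := by
      have h1 : ((1/t) * (L * x))^n / (Nat.factorial n : ℝ) ≤ Real.exp ((1/t) * (L * x)) :=
        Real.pow_div_factorial_le_exp _ (by positivity) n
      have hfac : (0:ℝ) < (Nat.factorial n : ℝ) := Nat.cast_pos.2 (Nat.factorial_pos n)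
      have h2 : ((1/t) * (L * x))^n / (Nat.factorial n : ℝ)
          = ((L*x)^n / (Nat.factorial n : ℝ)) / t^n := by
        rw [mul_pow]
        field_simp
        ring_nf; rw [← mul_pow, mul_inv_cancel₀ ht0.ne', one_pow]
      rw [h2, div_le_iff₀ (pow_pos ht0 n)] at h1
      exact h1
    have hρn : ρ^n = t^n * Real.exp ((n:ℝ) * (1 - t)) := by
      rw [hρdef, mul_pow, Real.exp_nat_mul]
    have hexp : Real.exp ((1/t) * (L * x)) * Real.exp (-(L * x))
        = Real.exp ((1/t - 1) * L * α) * Real.exp ((n:ℝ) * (1 - t)) := by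
      rw [← Real.exp_add, ← Real.exp_add]
      congr 1
      rw [hxdef, htdef]
      have hβ' : β ≠ 0 := ne_of_gt hβpos
      have hL' : L ≠ 0 := ne_of_gt hL0
      field_simp
      ring
    have hxle : x ≤ (α + β) * ((n:ℝ)+1) := by
      rw [hxdef]; nlinarith [Nat.cast_nonneg (α := ℝ) n]
    calc (1 / (Nat.factorial n : ℝ)) * L ^ n * x ^ (n + s) * a ^ (-x)
        = ((L * x)^n / (Nat.factorial n : ℝ)) * x^s * Real.exp (-(L * x)) := by
          rw [hrpow n, ← hxdef, pow_add, mul_pow]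
          ring
      _ ≤ (Real.exp ((1/t) * (L * x)) * t^n) * x^s * Real.exp (-(L * x)) := by
          gcongr
      _ = (Real.exp ((1/t) * (L * x)) * Real.exp (-(L * x))) * t^n * x^s := by ring
      _ = Real.exp ((1/t - 1) * L * α) * (ρ^n * x^s) := by
          rw [hexp, hρn]; ring
      _ ≤ Real.exp ((1/t - 1) * L * α) * (ρ^n * ((α + β) * ((n:ℝ)+1))^s) := by
          gcongr
      _ = Real.exp ((1/t - 1) * L * α) * (α + β) ^ s * (((n:ℝ)+1)^s * ρ^n) := by
          rw [mul_pow (α+β) ((n:ℝ)+1) s]; ring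

/-- `S(r,α,β,a) = Σ_{k=0}^∞ (1/k!) (log a)^k (α+βk)^{k+r-1} a^{-(α+βk)}`
(the exponent `k+r-1` is taken in `ℤ`). -/
noncomputable def SJ (r : ℕ) (α β a : ℝ) : ℝ :=
  ∑' k : ℕ, (1 / (Nat.factorial k : ℝ)) * Real.log a ^ k *
    (α + β * (k : ℝ)) ^ ((k : ℤ) + (r : ℤ) - 1) * a ^ (-(α + β * (k : ℝ)))

theorem SJ_recurrence (a β α : ℝ) (ha₁ : 1 < a) (ha₂ : a ≤ Real.exp 1)
    (hβ₀ : 0 ≤ β) (hβ₁ : β < 1) (hα : 0 < α) (r : ℕ) (hr : 1 ≤ r) :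
    Summable (fun k : ℕ =>
        (β * Real.log a) ^ k * (α + (k : ℝ) * β) * SJ (r - 1) (α + (k : ℝ) * β) β a) ∧
      SJ r α β a =
        ∑' k : ℕ, (β * Real.log a) ^ k * (α + (k : ℝ) * β) * SJ (r - 1) (α + (k : ℝ) * β) β a := by
  have ha0 : (0:ℝ) < a := lt_trans one_pos ha₁
  have hL0 : 0 < Real.log a := Real.log_pos ha₁
  set L := Real.log a with hLdef
  -- the double-indexed family
  set f : ℕ × ℕ → ℝ := fun p =>
    (β * L) ^ p.1 * (α + (p.1 : ℝ) * β) *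
      ((1 / (Nat.factorial p.2 : ℝ)) * L ^ p.2 *
        ((α + (p.1 : ℝ) * β) + β * (p.2 : ℝ)) ^ ((p.2 : ℤ) + ((r-1 : ℕ) : ℤ) - 1) *
        a ^ (-((α + (p.1 : ℝ) * β) + β * (p.2 : ℝ)))) with hfdef
  have hcast : ((r - 1 : ℕ) : ℤ) = (r : ℤ) - 1 := by
    have : (1:ℕ) ≤ r := hr
    omega
  have hxk : ∀ k : ℕ, 0 < α + (k:ℝ) * β := fun k => by positivity
  have hxn : ∀ n : ℕ, 0 < α + β * (n:ℝ) := fun n => by positivity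
  -- nonnegativity of f
  have hf0 : ∀ p : ℕ × ℕ, 0 ≤ f p := by
    rintro ⟨k, m⟩
    have h1 : (0:ℝ) ≤ β * L := mul_nonneg hβ₀ hL0.le
    have h2 : (0:ℝ) < α + (k:ℝ) * β := hxk k
    have h3 : (0:ℝ) < (α + (k:ℝ) * β) + β * (m:ℝ) := by positivity
    have h4 : (0:ℝ) < ((α + (k:ℝ) * β) + β * (m:ℝ)) ^ ((m : ℤ) + ((r-1 : ℕ) : ℤ) - 1) :=
      zpow_pos h3 _
    have h5 : (0:ℝ) < a ^ (-((α + (k:ℝ) * β) + β * (m:ℝ))) := Real.rpow_pos_of_pos ha0 _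
    have h6 : (0:ℝ) < L ^ m := pow_pos hL0 m
    have h7 : (0:ℝ) < 1 / (Nat.factorial m : ℝ) := by positivity
    have := pow_nonneg h1 k
    simp only [hfdef]
    positivity
  -- the n-th term of the SJ r series
  set g : ℕ → ℝ := fun n => (1 / (Nat.factorial n : ℝ)) * L ^ n *
    (α + β * (n : ℝ)) ^ ((n : ℤ) + (r : ℤ) - 1) * a ^ (-(α + β * (n : ℝ))) with hgdef
  -- antidiagonal sums of f equal g
  have hdiag : ∀ n : ℕ, ∑ p ∈ Finset.HasAntidiagonal.antidiagonal n, f p = g n := by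
    intro n
    rw [Finset.Nat.sum_antidiagonal_eq_sum_range_succ_mk]
    have hx0 : (0:ℝ) < α + β * (n:ℝ) := hxn n
    have hxne : (α + β * (n:ℝ)) ≠ 0 := hx0.ne'
    set x := α + β * (n:ℝ) with hxdef
    set D : ℝ := L ^ n * a ^ (-x) * x ^ ((n : ℤ) + (r : ℤ) - 1) * (x ^ (n+1))⁻¹ with hDdef
    have hterm : ∀ k ∈ Finset.range (n+1),
        f (k, n - k) = (β ^ k * (α + β * (k:ℝ)) * x ^ (n-k) / (Nat.factorial (n-k) : ℝ)) * D := by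
      intro k hk
      rw [Finset.mem_range] at hk
      have hkn : k ≤ n := by omega
      have hbase : (α + (k:ℝ) * β) + β * ((n - k : ℕ) : ℝ) = x := by
        rw [Nat.cast_sub hkn, hxdef]; ring
      have hzpow : x ^ ((((n - k : ℕ)) : ℤ) + ((r-1:ℕ) : ℤ) - 1)
          = x ^ ((n-k : ℕ)) * (x ^ ((n : ℤ) + (r : ℤ) - 1) * (x ^ (n+1))⁻¹) := by
        rw [← zpow_natCast x (n-k), ← zpow_natCast x (n+1), ← zpow_neg,
          ← zpow_add₀ hxne, ← zpow_add₀ hxne]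
        congr 1
        rw [hcast]
        push_cast [hkn]
        ring
      have hLpow : L ^ k * L ^ (n - k) = L ^ n := by
        rw [← pow_add]
        congr 1
        omega
      have hLne : L ≠ 0 := hL0.ne'
      have hL2 : L ^ (n - k) = L ^ n / L ^ k := by
        rw [eq_div_iff (pow_ne_zero k hLne), ← pow_add]
        congr 1
        omega
      simp only [hfdef, hbase, hzpow, hDdef, hL2]
      rw [mul_pow]
      field_simp
    rw [Finset.sum_congr rfl hterm, ← Finset.sum_mul]
    have := telescopeB α β n
    have hB : ∑ k ∈ Finset.range (n+1),
        β ^ k * (α + β * (k:ℝ)) * x ^ (n-k) / (Nat.factorial (n-k) : ℝ)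
          = x ^ (n+1) / (Nat.factorial n : ℝ) := this
    rw [hB, hgdef, hDdef]
    have hxp : (x:ℝ) ^ (n+1) ≠ 0 := pow_ne_zero _ hxne
    field_simp
    rw [hxdef]; ring_nf
  -- summability of g
  have hgsum : Summable g := by
    have := g_summable a β α ha₁ ha₂ hβ₀ hβ₁ hα (r - 1)
    refine this.congr (fun n => ?_)
    have he : ((n + (r-1) : ℕ) : ℤ) = (n : ℤ) + (r : ℤ) - 1 := by
      push_cast [hcast]
      omega
    show _ = 1 / (Nat.factorial n : ℝ) * L ^ n *
      (α + β * (n:ℝ)) ^ ((n : ℤ) + (r : ℤ) - 1) * a ^ (-(α + β * (n:ℝ)))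
    rw [← he, zpow_natCast]
  -- summability over the sigma type
  have hFsum : Summable (fun σ : (Σ n : ℕ, Finset.HasAntidiagonal.antidiagonal n) => f σ.2) := by
    refine (summable_sigma_of_nonneg (fun σ => hf0 _)).2 ⟨fun n => ?_, ?_⟩
    · exact Summable.of_finite
    · refine hgsum.congr (fun n => ?_)
      rw [Finset.tsum_subtype (Finset.HasAntidiagonal.antidiagonal n) f, hdiag n]
  have hfsum : Summable f :=
    (Finset.HasAntidiagonal.sigmaAntidiagonalEquivProd (A := ℕ)).summable_iff.1 hFsum
  -- prod decomposition
  have hprod := (summable_prod_of_nonneg hf0).1 hfsum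
  -- identify the columns
  have hT : ∀ k : ℕ, (β * L) ^ k * (α + (k:ℝ) * β) * SJ (r - 1) (α + (k:ℝ) * β) β a
      = ∑' m : ℕ, f (k, m) := by
    intro k
    rw [SJ]
    exact (tsum_mul_left).symm
  constructor
  · exact hprod.2.congr (fun k => (hT k).symm)
  · have e1 : SJ r α β a = ∑' n, g n := rfl
    have e2 : ∑' n, g n = ∑' n, ∑' (p : (Finset.HasAntidiagonal.antidiagonal n : Finset (ℕ × ℕ))), f p := by
      refine tsum_congr (fun n => ?_)
      rw [Finset.tsum_subtype (Finset.HasAntidiagonal.antidiagonal n) f, hdiag n]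
    have e3 : ∑' n, ∑' (p : (Finset.HasAntidiagonal.antidiagonal n : Finset (ℕ × ℕ))), f p
        = ∑' σ : (Σ n : ℕ, Finset.HasAntidiagonal.antidiagonal n), f σ.2 :=
      (hFsum.tsum_sigma' (fun n => Summable.of_finite)).symm
    have e4 : ∑' σ : (Σ n : ℕ, Finset.HasAntidiagonal.antidiagonal n), f σ.2 = ∑' p : ℕ × ℕ, f p :=
      (Finset.HasAntidiagonal.sigmaAntidiagonalEquivProd (A := ℕ)).tsum_eq f
    have e5 : ∑' p : ℕ × ℕ, f p = ∑' k, ∑' m, f (k, m) :=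
      hfsum.tsum_prod' hprod.1
    rw [e1, e2, e3, e4, e5]
    exact tsum_congr (fun k => (hT k).symm)
end

section
/- For all real a, β, α with 1 < a ≤ e, 0 ≤ β < 1 and α > 0, one has S(1,α,β,a) = 1/(1 − β·log a); in particular S(1,α,β,a) does not depend on α. -/
open Finset fwdDiff Function

section FiniteDiff

lemma fd_iter_zero (n : ℕ) : Δ_[(1:ℕ)] ^[n] (0 : ℕ → ℂ) = 0 := by
  induction n with
  | zero => rfl
  | succ n ih =>
    rw [iterate_succ_apply]
    have : Δ_[(1:ℕ)] (0 : ℕ → ℂ) = 0 := by funext k; simp [fwdDiff]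
    rw [this, ih]

lemma fd_pow (j : ℕ) :
    Δ_[(1:ℕ)] (fun k : ℕ => (k : ℂ) ^ j) =
      ∑ i ∈ range j, fun k : ℕ => (j.choose i : ℂ) * (k : ℂ) ^ i := by
  funext k
  simp only [fwdDiff, Finset.sum_apply]
  push_cast
  rw [add_pow]
  rw [Finset.sum_range_succ]
  simp [mul_comm]

lemma fd_iter_pow_lt : ∀ j m : ℕ, j < m →
    Δ_[(1:ℕ)] ^[m] (fun k : ℕ => (k : ℂ) ^ j) = 0 := by
  intro j
  induction j using Nat.strong_induction_on with
  | _ j IH =>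
    intro m hm
    obtain ⟨m', rfl⟩ : ∃ m', m = m' + 1 := ⟨m - 1, by omega⟩
    rw [iterate_succ_apply, fd_pow, fwdDiff_iter_finset_sum]
    refine Finset.sum_eq_zero fun i hi => ?_
    have hi' : i < j := mem_range.mp hi
    have : (fun k : ℕ => (j.choose i : ℂ) * (k : ℂ) ^ i)
        = (j.choose i : ℂ) • (fun k : ℕ => (k : ℂ) ^ i) := by
      funext k; simp
    rw [this, fwdDiff_iter_const_smul, IH i hi' m' (by omega)]
    simp

lemma fd_iter_pow_self : ∀ m : ℕ,
    Δ_[(1:ℕ)] ^[m] (fun k : ℕ => (k : ℂ) ^ m) = fun _ => (m.factorial : ℂ) := by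
  intro m
  induction m with
  | zero => funext k; simp
  | succ m ih =>
    rw [iterate_succ_apply, fd_pow, fwdDiff_iter_finset_sum]
    rw [Finset.sum_range_succ]
    have h0 : ∀ i ∈ range m,
        Δ_[(1:ℕ)] ^[m] (fun k : ℕ => ((m+1).choose i : ℂ) * (k : ℂ) ^ i) = 0 := by
      intro i hi
      have : (fun k : ℕ => ((m+1).choose i : ℂ) * (k : ℂ) ^ i)
          = ((m+1).choose i : ℂ) • (fun k : ℕ => (k : ℂ) ^ i) := by funext k; simp
      rw [this, fwdDiff_iter_const_smul, fd_iter_pow_lt i m (mem_range.mp hi)]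
      simp
    rw [Finset.sum_eq_zero h0]
    have : (fun k : ℕ => ((m+1).choose m : ℂ) * (k : ℂ) ^ m)
        = ((m+1).choose m : ℂ) • (fun k : ℕ => (k : ℂ) ^ m) := by funext k; simp
    rw [this, fwdDiff_iter_const_smul, ih]
    funext k
    simp only [Pi.add_apply, Pi.zero_apply, Pi.smul_apply, smul_eq_mul,
      Nat.choose_succ_self_right, Nat.factorial_succ, zero_add]
    push_cast
    ring

/-- The key finite-difference identity:
`∑_{k=0}^m (-1)^(m-k) C(m,k) (x+y k)^m = m! y^m`. -/
lemma sum_alt_choose_pow (m : ℕ) (x y : ℂ) :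
    ∑ k ∈ range (m+1), ((-1:ℂ)) ^ (m-k) * (m.choose k : ℂ) * (x + y * k) ^ m
      = (m.factorial : ℂ) * y ^ m := by
  have key := fwdDiff_iter_eq_sum_shift (1:ℕ) (fun k : ℕ => (x + y * k) ^ m) m 0
  have hf : (fun k : ℕ => (x + y * k) ^ m)
      = ∑ j ∈ range (m+1), ((m.choose j : ℂ) * x ^ (m-j) * y ^ j) • (fun k : ℕ => (k:ℂ) ^ j) := by
    funext k
    rw [Finset.sum_apply]
    simp only [Pi.smul_apply, smul_eq_mul]
    rw [add_comm, add_pow]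
    refine Finset.sum_congr rfl fun j hj => ?_
    ring
  have hDf : Δ_[(1:ℕ)] ^[m] (fun k : ℕ => (x + y * k) ^ m) = fun _ => (m.factorial : ℂ) * y ^ m := by
    rw [hf, fwdDiff_iter_finset_sum]
    rw [Finset.sum_range_succ]
    have h0 : ∀ j ∈ range m,
        Δ_[(1:ℕ)] ^[m] (((m.choose j : ℂ) * x ^ (m-j) * y ^ j) • (fun k : ℕ => (k:ℂ) ^ j)) = 0 := by
      intro j hj
      rw [fwdDiff_iter_const_smul, fd_iter_pow_lt j m (mem_range.mp hj)]
      simp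
    rw [Finset.sum_eq_zero h0, fwdDiff_iter_const_smul, fd_iter_pow_self]
    funext k
    simp
    ring
  rw [hDf] at key
  simp only [zero_add, smul_eq_mul, mul_one, Nat.cast_id] at key
  rw [key]
  refine Finset.sum_congr rfl fun k hk => ?_
  rw [zsmul_eq_mul]
  push_cast
  ring

end FiniteDiff

open Finset Function

section Bounds

lemma pow_div_fact_le_exp {x : ℝ} (hx : 0 ≤ x) (k : ℕ) :
    x ^ k / k.factorial ≤ Real.exp x := by
  refine le_trans ?_ (Real.sum_le_exp_of_nonneg hx (k+1))
  exact Finset.single_le_sum (f := fun i => x ^ i / i.factorial)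
    (fun i _ => by positivity) (self_mem_range_succ k)

lemma ratio_bound {α β : ℝ} (hα : 0 < α) (hβ : 0 < β) (k : ℕ) :
    (α + β * k) ^ k / k.factorial ≤ Real.exp (α / β) * (β * Real.exp 1) ^ k := by
  rcases Nat.eq_zero_or_pos k with rfl | hk
  · simpa using Real.one_le_exp (by positivity)
  have hk0 : (0:ℝ) < k := by exact_mod_cast hk
  have h1 : (α + β * k) ^ k ≤ Real.exp (α / β) * (β * k) ^ k := by
    have he : α + β * k = (β * k) * (1 + α / (β * k)) := by field_simp; ring
    rw [he, mul_pow]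
    have h2 : (1 + α / (β * k)) ^ k ≤ Real.exp (α / β) := by
      calc (1 + α / (β * k)) ^ k ≤ (Real.exp (α / (β*k))) ^ k := by
            apply pow_le_pow_left₀ (by positivity)
            have := Real.add_one_le_exp (α / (β*k))
            linarith
        _ = Real.exp (k * (α / (β*k))) := by rw [Real.exp_nat_mul]
        _ = Real.exp (α / β) := by congr 1; field_simp
    calc (β*k)^k * (1 + α/(β*k))^k ≤ (β*k)^k * Real.exp (α/β) :=
          mul_le_mul_of_nonneg_left h2 (by positivity)
      _ = Real.exp (α/β) * (β*k)^k := mul_comm _ _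
  have h3 : (k:ℝ)^k / k.factorial ≤ Real.exp 1 ^ k := by
    rw [← Real.exp_nat_mul, mul_one]
    exact pow_div_fact_le_exp hk0.le k
  have hfac : (0:ℝ) < k.factorial := by exact_mod_cast k.factorial_pos
  calc (α + β * k) ^ k / k.factorial ≤ (Real.exp (α / β) * (β * k) ^ k) / k.factorial := by
        exact (div_le_div_iff_of_pos_right hfac).mpr h1
    _ = Real.exp (α / β) * β ^ k * ((k:ℝ)^k / k.factorial) := by
        rw [mul_pow]; ring
    _ ≤ Real.exp (α / β) * β ^ k * Real.exp 1 ^ k := by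
        apply mul_le_mul_of_nonneg_left h3 (by positivity)
    _ = Real.exp (α / β) * (β * Real.exp 1) ^ k := by rw [mul_pow]; ring

end Bounds

section Domain

/-- The comparison function controlling the series. -/
noncomputable def gfun (β : ℝ) (z : ℂ) : ℝ := β * ‖z‖ * Real.exp (1 - β * z.re)

/-- The domain on which we prove the identity. -/
def dom (β : ℝ) : Set ℂ := {z | β * z.re < 1 ∧ gfun β z < 1}

lemma continuous_gfun (β : ℝ) : Continuous (gfun β) := by
  unfold gfun
  fun_prop

lemma isOpen_dom (β : ℝ) : IsOpen (dom β) := by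
  have h1 : IsOpen {z : ℂ | β * z.re < 1} :=
    isOpen_lt (by fun_prop) continuous_const
  have h2 : IsOpen {z : ℂ | gfun β z < 1} :=
    isOpen_lt (continuous_gfun β) continuous_const
  exact h1.inter h2

lemma zero_mem_dom {β : ℝ} : (0:ℂ) ∈ dom β := by
  constructor <;> simp [gfun]

lemma starConvex_dom {β : ℝ} (hβ : 0 ≤ β) : StarConvex ℝ (0:ℂ) (dom β) := by
  intro z hz a b ha hb hab
  have hs1 : b ≤ 1 := by linarith
  simp only [smul_zero, zero_add]
  obtain ⟨hz1, hz2⟩ := hz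
  set B := β * z.re with hB
  have hre : (b • z).re = b * z.re := by
    simp [Complex.smul_re]
  have hnorm : ‖b • z‖ = b * ‖z‖ := by
    rw [norm_smul, Real.norm_eq_abs, abs_of_nonneg hb]
  constructor
  · show β * (b • z).re < 1
    rw [hre]
    have : β * (b * z.re) = b * B := by ring
    rw [this]
    rcases le_or_gt B 0 with h | h
    · nlinarith
    · calc b * B ≤ 1 * B := mul_le_mul_of_nonneg_right hs1 h.le
        _ < 1 := by linarith
  · show gfun β (b • z) < 1
    unfold gfun
    rw [hre, hnorm]
    have key : b * Real.exp (1 - β * (b * z.re)) ≤ Real.exp (1 - B) := by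
      have hb' : b ≤ Real.exp (-(1-b) * B) := by
        have h1 := Real.add_one_le_exp (-(1-b) * B)
        nlinarith [mul_le_mul_of_nonneg_left hz1.le (sub_nonneg.mpr hs1)]
      calc b * Real.exp (1 - β * (b * z.re)) ≤ Real.exp (-(1-b) * B) * Real.exp (1 - b * B) := by
            apply mul_le_mul_of_nonneg_right hb' (Real.exp_pos _).le |>.trans_eq
            congr 1
            rw [hB]; ring_nf
        _ = Real.exp (1 - B) := by rw [← Real.exp_add]; congr 1; ring
    calc β * (b * ‖z‖) * Real.exp (1 - β * (b * z.re))
        = (β * ‖z‖) * (b * Real.exp (1 - β * (b * z.re))) := by ring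
      _ ≤ (β * ‖z‖) * Real.exp (1 - B) := by
          apply mul_le_mul_of_nonneg_left key (by positivity)
      _ = gfun β z := by unfold gfun; ring
      _ < 1 := hz2

lemma isPreconnected_dom {β : ℝ} (hβ : 0 ≤ β) : IsPreconnected (dom β) := by
  have hstar := starConvex_dom (β := β) hβ
  have : IsPathConnected (dom β) := by
    rw [isPathConnected_iff]
    refine ⟨⟨0, zero_mem_dom⟩, fun x hx y hy => ?_⟩
    have hx0 : JoinedIn (dom β) 0 x := JoinedIn.of_segment_subset (hstar.segment_subset hx)
    have hy0 : JoinedIn (dom β) 0 y := JoinedIn.of_segment_subset (hstar.segment_subset hy)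
    exact hx0.symm.trans hy0
  exact this.isConnected.isPreconnected

lemma self_exp_lt_one {u : ℝ} (hu0 : 0 ≤ u) (hu1 : u < 1) : u * Real.exp (1 - u) < 1 := by
  rcases eq_or_lt_of_le hu0 with h | h
  · simp [← h]
  · have hlog : Real.log u < u - 1 := Real.log_lt_sub_one_of_pos h (by linarith)
    have : u * Real.exp (1 - u) = Real.exp (Real.log u + (1 - u)) := by
      rw [Real.exp_add, Real.exp_log h]
    rw [this]
    calc Real.exp (Real.log u + (1 - u)) < Real.exp 0 := by
          apply Real.exp_lt_exp.mpr; linarith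
      _ = 1 := Real.exp_zero

lemma real_mem_dom {β t : ℝ} (hβ : 0 ≤ β) (ht : 0 ≤ t) (h1 : β * t < 1) :
    (t : ℂ) ∈ dom β := by
  constructor
  · simpa using h1
  · show gfun β t < 1
    unfold gfun
    simp only [Complex.norm_real, Real.norm_eq_abs, Complex.ofReal_re, abs_of_nonneg ht]
    exact self_exp_lt_one (by positivity) h1

end Domain
section MainAnalytic

open Finset Function

/-- The `k`-th term of the series, as a function of a complex variable. -/
noncomputable def fterm (α β : ℝ) (k : ℕ) (z : ℂ) : ℂ :=
  ((k.factorial : ℂ))⁻¹ * z ^ k * ((α : ℂ) + (β : ℂ) * (k : ℕ)) ^ k *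
    Complex.exp (-((α : ℂ) + (β : ℂ) * (k : ℕ)) * z)

lemma coef_ofReal (α β : ℝ) (k : ℕ) :
    (α : ℂ) + (β : ℂ) * (k : ℕ) = ((α + β * k : ℝ) : ℂ) := by push_cast; ring

lemma norm_fterm {α β : ℝ} (hα : 0 < α) (hβ : 0 ≤ β) (k : ℕ) (z : ℂ) :
    ‖fterm α β k z‖ = (α + β * k) ^ k / k.factorial * ‖z‖ ^ k
      * Real.exp (-(α + β * k) * z.re) := by
  have hc : (0:ℝ) ≤ α + β * k := by positivity
  unfold fterm
  rw [coef_ofReal]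
  have harg : -((α + β * k : ℝ) : ℂ) * z = (((-(α + β * k) : ℝ)) : ℂ) * z := by push_cast; ring
  rw [harg, norm_mul, norm_mul, norm_mul, norm_inv, norm_pow, norm_pow]
  rw [Complex.norm_exp, Complex.re_ofReal_mul]
  rw [Complex.norm_real, Complex.norm_natCast, Real.norm_eq_abs, abs_of_nonneg hc]
  ring

lemma fterm_le {α β : ℝ} (hα : 0 < α) (hβ : 0 < β) (k : ℕ) (z : ℂ) :
    ‖fterm α β k z‖ ≤ Real.exp (α / β - α * z.re) * gfun β z ^ k := by
  rw [norm_fterm hα hβ.le]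
  have e1 : Real.exp (-(α + β * k) * z.re)
      = Real.exp (-α * z.re) * Real.exp (-(β * z.re)) ^ k := by
    rw [← Real.exp_nat_mul, ← Real.exp_add]; congr 1; ring
  have e2 : Real.exp (α / β - α * z.re) = Real.exp (α / β) * Real.exp (-α * z.re) := by
    rw [← Real.exp_add]; congr 1; ring
  have e3 : gfun β z ^ k
      = β ^ k * ‖z‖ ^ k * Real.exp 1 ^ k * Real.exp (-(β * z.re)) ^ k := by
    unfold gfun
    have : Real.exp (1 - β * z.re) = Real.exp 1 * Real.exp (-(β * z.re)) := by
      rw [sub_eq_add_neg, Real.exp_add]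
    rw [this]
    ring
  rw [e1, e2, e3]
  have hP : (0:ℝ) ≤ ‖z‖ ^ k * (Real.exp (-α * z.re) * Real.exp (-(β * z.re)) ^ k) := by positivity
  calc (α + β * k) ^ k / k.factorial * ‖z‖ ^ k * (Real.exp (-α * z.re) * Real.exp (-(β * z.re)) ^ k)
      = ((α + β * k) ^ k / k.factorial) * (‖z‖ ^ k * (Real.exp (-α * z.re) * Real.exp (-(β * z.re)) ^ k)) := by ring
    _ ≤ (Real.exp (α / β) * (β * Real.exp 1) ^ k) * (‖z‖ ^ k * (Real.exp (-α * z.re) * Real.exp (-(β * z.re)) ^ k)) :=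
        mul_le_mul_of_nonneg_right (ratio_bound hα hβ k) hP
    _ = Real.exp (α / β) * Real.exp (-α * z.re) * (β ^ k * ‖z‖ ^ k * Real.exp 1 ^ k * Real.exp (-(β * z.re)) ^ k) := by
        rw [mul_pow]; ring

/-- The sum of the series as a function on `ℂ`. -/
noncomputable def Fc (α β : ℝ) (z : ℂ) : ℂ := ∑' k, fterm α β k z

lemma diff_fterm (α β : ℝ) (k : ℕ) : Differentiable ℂ (fterm α β k) := by
  unfold fterm
  have h1 : Differentiable ℂ fun z : ℂ => Complex.exp (-((α : ℂ) + (β : ℂ) * (k : ℕ)) * z) :=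
    Differentiable.cexp (by fun_prop)
  fun_prop

lemma tlu_Fc {α β : ℝ} (hα : 0 < α) (hβ : 0 < β) :
    TendstoLocallyUniformlyOn (fun (s : Finset ℕ) z => ∑ k ∈ s, fterm α β k z)
      (Fc α β) Filter.atTop (dom β) := by
  rw [tendstoLocallyUniformlyOn_iff_forall_isCompact (isOpen_dom β)]
  intro K hK hKc
  rcases K.eq_empty_or_nonempty with rfl | hne
  · exact tendstoUniformlyOn_empty
  obtain ⟨z₀, hz₀K, hz₀⟩ := hKc.exists_isMaxOn hne (continuous_gfun β).continuousOn
  have hcontC : Continuous fun z : ℂ => Real.exp (α / β - α * z.re) := by fun_prop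
  obtain ⟨z₁, hz₁K, hz₁⟩ := hKc.exists_isMaxOn hne hcontC.continuousOn
  have hq0 : 0 ≤ gfun β z₀ := by unfold gfun; positivity
  have hq1 : gfun β z₀ < 1 := (hK hz₀K).2
  apply tendstoUniformlyOn_tsum
    ((summable_geometric_of_lt_one hq0 hq1).mul_left (Real.exp (α / β - α * z₁.re)))
  intro k z hz
  calc ‖fterm α β k z‖ ≤ Real.exp (α / β - α * z.re) * gfun β z ^ k := fterm_le hα hβ k z
    _ ≤ Real.exp (α / β - α * z₁.re) * gfun β z₀ ^ k := by
        have hg0 : 0 ≤ gfun β z := by unfold gfun; positivity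
        exact mul_le_mul (hz₁ hz) (pow_le_pow_left₀ hg0 (hz₀ hz) k)
          (pow_nonneg hg0 k) (Real.exp_pos _).le

lemma diffOn_Fc {α β : ℝ} (hα : 0 < α) (hβ : 0 < β) :
    DifferentiableOn ℂ (Fc α β) (dom β) := by
  apply (tlu_Fc hα hβ).differentiableOn ?_ (isOpen_dom β)
  apply Filter.Eventually.of_forall
  intro s
  apply DifferentiableOn.fun_sum
  intro k _
  exact (diff_fterm α β k).differentiableOn

end MainAnalytic
section SmallBall

open Finset Function

/-- Reindexing of `ℕ × ℕ` by diagonals. -/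
noncomputable def diagEquiv : (Σ m : ℕ, Fin (m+1)) ≃ ℕ × ℕ :=
  Equiv.ofBijective (fun x => ((x.2 : ℕ), x.1 - (x.2 : ℕ)))
    ⟨by
      rintro ⟨m₁, j₁⟩ ⟨m₂, j₂⟩ h
      have h1 : (j₁ : ℕ) = (j₂ : ℕ) := congrArg Prod.fst h
      have h2 : m₁ - (j₁ : ℕ) = m₂ - (j₂ : ℕ) := congrArg Prod.snd h
      have hj1 : (j₁ : ℕ) ≤ m₁ := Nat.lt_succ_iff.mp j₁.2
      have hj2 : (j₂ : ℕ) ≤ m₂ := Nat.lt_succ_iff.mp j₂.2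
      have hm : m₁ = m₂ := by omega
      subst hm
      exact congrArg _ (Fin.ext h1),
      fun p => ⟨⟨p.1 + p.2, ⟨p.1, by omega⟩⟩, by obtain ⟨k, n⟩ := p; simp⟩⟩

lemma diagEquiv_apply (m : ℕ) (j : Fin (m+1)) :
    diagEquiv ⟨m, j⟩ = ((j : ℕ), m - (j : ℕ)) := rfl

lemma tsum_diagEquiv (u : ℕ × ℕ → ℂ) (hUsum : Summable u) :
    ∑' p : ℕ × ℕ, u p = ∑' m : ℕ, ∑' j : Fin (m+1), u (diagEquiv ⟨m, j⟩) := by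
  rw [← diagEquiv.tsum_eq u]
  rw [Summable.tsum_sigma (show Summable (fun c : Σ m : ℕ, Fin (m+1) => u (diagEquiv c)) from
      diagEquiv.summable_iff.mpr hUsum)]

lemma tsum_diag (u : ℕ × ℕ → ℂ) (hUsum : Summable u) :
    ∑' p : ℕ × ℕ, u p = ∑' m : ℕ, ∑ j ∈ Finset.range (m+1), u (j, m - j) := by
  rw [tsum_diagEquiv u hUsum]
  apply tsum_congr
  intro m
  rw [tsum_fintype]
  exact Fin.sum_univ_eq_sum_range (fun j => u (j, m - j)) (m+1)

lemma exp_tsum_real (x : ℝ) : ∑' n : ℕ, x ^ n / (n.factorial : ℝ) = Real.exp x := by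
  rw [Real.exp_eq_exp_ℝ, NormedSpace.exp_eq_tsum_div]

lemma exp_tsum_complex (w : ℂ) : ∑' n : ℕ, w ^ n / (n.factorial : ℂ) = Complex.exp w := by
  rw [Complex.exp_eq_exp_ℂ, NormedSpace.exp_eq_tsum_div]

lemma Fc_eq_on_ball {α β : ℝ} (hα : 0 < α) (hβ : 0 < β) (hβ1 : β < 1) :
    ∃ ε > 0, ∀ z : ℂ, ‖z‖ < ε → Fc α β z = (1 - (β : ℂ) * z)⁻¹ := by
  have he1 : (0:ℝ) < Real.exp 1 := Real.exp_pos 1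
  refine ⟨min 1 (2 * β * Real.exp 1 ^ 2)⁻¹, by positivity, fun z hz => ?_⟩
  have hz1 : ‖z‖ < 1 := lt_of_lt_of_le hz (min_le_left _ _)
  have hz2 : ‖z‖ < (2 * β * Real.exp 1 ^ 2)⁻¹ := lt_of_lt_of_le hz (min_le_right _ _)
  set u : ℕ × ℕ → ℂ := fun p =>
    ((p.1.factorial : ℂ))⁻¹ * z ^ p.1 * ((α : ℂ) + (β : ℂ) * (p.1 : ℕ)) ^ p.1 *
      ((-((α : ℂ) + (β : ℂ) * (p.1 : ℕ)) * z) ^ p.2 / (p.2.factorial : ℂ)) with hu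
  have hcnn : ∀ k : ℕ, (0:ℝ) ≤ α + β * k := fun k => by positivity
  have hnu : ∀ p : ℕ × ℕ, ‖u p‖ =
      ((α + β * p.1) ^ p.1 / p.1.factorial * ‖z‖ ^ p.1) *
        (((α + β * p.1) * ‖z‖) ^ p.2 / p.2.factorial) := by
    rintro ⟨k, n⟩
    simp only [hu]
    rw [coef_ofReal]
    have harg : -((α + β * k : ℝ) : ℂ) * z = (((-(α + β * k) : ℝ)) : ℂ) * z := by
      push_cast; ring
    rw [harg]
    simp only [norm_mul, norm_div, norm_inv, norm_pow, Complex.norm_real, Complex.norm_natCast,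
      Real.norm_eq_abs, abs_neg]
    rw [abs_of_nonneg (hcnn k), mul_pow]
    ring
  -- inner summability and value
  have hinner : ∀ k : ℕ, Summable (fun n => ‖u (k, n)‖) := by
    intro k
    apply Summable.congr (f := fun n => ((α + β * k) ^ k / k.factorial * ‖z‖ ^ k) *
      (((α + β * k) * ‖z‖) ^ n / n.factorial))
    · exact (Real.summable_pow_div_factorial _).mul_left _
    · intro n; rw [hnu ⟨k, n⟩]
  have hinner_val : ∀ k : ℕ, ∑' n, ‖u (k, n)‖ =
      ((α + β * k) ^ k / k.factorial * ‖z‖ ^ k) * Real.exp ((α + β * k) * ‖z‖) := by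
    intro k
    calc ∑' n, ‖u (k, n)‖
        = ∑' n, ((α + β * k) ^ k / k.factorial * ‖z‖ ^ k) *
            (((α + β * k) * ‖z‖) ^ n / n.factorial) := by
          apply tsum_congr; intro n; rw [hnu ⟨k, n⟩]
      _ = ((α + β * k) ^ k / k.factorial * ‖z‖ ^ k) *
            ∑' n, (((α + β * k) * ‖z‖) ^ n / n.factorial) := tsum_mul_left
      _ = _ := by rw [exp_tsum_real]
  -- outer summability via geometric bound
  have houter : Summable (fun k : ℕ => ∑' n, ‖u (k, n)‖) := by
    have hr : β * Real.exp 1 * ‖z‖ * Real.exp (β * ‖z‖) ≤ 1/2 := by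
      have h1 : Real.exp (β * ‖z‖) ≤ Real.exp 1 :=
        Real.exp_le_exp.mpr (by nlinarith [norm_nonneg z])
      have h2 : β * Real.exp 1 * ‖z‖ * Real.exp (β * ‖z‖)
          ≤ β * Real.exp 1 * ‖z‖ * Real.exp 1 :=
        mul_le_mul_of_nonneg_left h1 (by positivity)
      have h3 : β * Real.exp 1 ^ 2 * ‖z‖ ≤ 1/2 := by
        calc β * Real.exp 1 ^ 2 * ‖z‖ ≤ β * Real.exp 1 ^ 2 * (2 * β * Real.exp 1 ^ 2)⁻¹ :=
              mul_le_mul_of_nonneg_left hz2.le (by positivity)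
          _ = 1/2 := by field_simp
      have h4 : β * Real.exp 1 * ‖z‖ * Real.exp 1 = β * Real.exp 1 ^ 2 * ‖z‖ := by ring
      linarith
    refine Summable.of_nonneg_of_le (fun k => ?_) (fun k => ?_)
      ((summable_geometric_of_lt_one (r := (1/2 : ℝ)) (by norm_num) (by norm_num)).mul_left
        (Real.exp (α/β) * Real.exp (α * ‖z‖)))
    · rw [hinner_val k]; positivity
    · rw [hinner_val k]
      have hb1 : (α + β * k) ^ k / k.factorial ≤ Real.exp (α/β) * (β * Real.exp 1) ^ k :=
        ratio_bound hα hβ k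
      have hb2 : Real.exp ((α + β * k) * ‖z‖)
          = Real.exp (α * ‖z‖) * Real.exp (β * ‖z‖) ^ k := by
        rw [← Real.exp_nat_mul, ← Real.exp_add]; congr 1; ring
      calc (α + β * k) ^ k / k.factorial * ‖z‖ ^ k * Real.exp ((α + β * k) * ‖z‖)
          ≤ (Real.exp (α/β) * (β * Real.exp 1) ^ k) * ‖z‖ ^ k * Real.exp ((α + β * k) * ‖z‖) := by
            apply mul_le_mul_of_nonneg_right (mul_le_mul_of_nonneg_right hb1 (by positivity))
              (Real.exp_pos _).le
        _ = (Real.exp (α/β) * Real.exp (α * ‖z‖)) *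
              (β * Real.exp 1 * ‖z‖ * Real.exp (β * ‖z‖)) ^ k := by
            rw [hb2, mul_pow, mul_pow, mul_pow]; ring
        _ ≤ (Real.exp (α/β) * Real.exp (α * ‖z‖)) * (1/2) ^ k := by
            apply mul_le_mul_of_nonneg_left (pow_le_pow_left₀ (by positivity) hr k)
              (by positivity)
  have hUnorm : Summable (fun p : ℕ × ℕ => ‖u p‖) :=
    (summable_prod_of_nonneg (fun p => norm_nonneg _)).mpr ⟨hinner, houter⟩
  have hUsum : Summable u := hUnorm.of_norm
  -- Step A : Fc z = ∑' p, u p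
  have hA : Fc α β z = ∑' p : ℕ × ℕ, u p := by
    rw [Summable.tsum_prod' hUsum (fun k => hUsum.prod_factor k)]
    unfold Fc
    apply tsum_congr
    intro k
    have : ∑' n, u (k, n)
        = (((k.factorial : ℂ))⁻¹ * z ^ k * ((α : ℂ) + (β : ℂ) * (k : ℕ)) ^ k) *
          ∑' n, ((-((α : ℂ) + (β : ℂ) * (k : ℕ)) * z) ^ n / (n.factorial : ℂ)) := by
      rw [← tsum_mul_left]
    rw [this, exp_tsum_complex]
    unfold fterm
    ring
  -- Step B : ∑' p, u p = ∑' m, (β z) ^ m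
  have hB : ∑' p : ℕ × ℕ, u p = ∑' m : ℕ, ((β : ℂ) * z) ^ m := by
    rw [tsum_diag u hUsum]
    apply tsum_congr
    intro m
    have hfact : (m.factorial : ℂ) ≠ 0 := Nat.cast_ne_zero.mpr m.factorial_pos.ne'
    have hstep : ∀ j ∈ range (m+1), u (j, m - j)
        = (m.factorial : ℂ)⁻¹ * z ^ m *
            ((-1 : ℂ) ^ (m - j) * (m.choose j : ℂ) * ((α : ℂ) + (β : ℂ) * (j : ℕ)) ^ m) := by
      intro j hj
      have hjm : j ≤ m := Nat.lt_succ_iff.mp (mem_range.mp hj)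
      have hz : z ^ j * z ^ (m - j) = z ^ m := by rw [← pow_add]; congr 1; omega
      have hd : ((α : ℂ) + (β : ℂ) * (j : ℕ)) ^ j * ((α : ℂ) + (β : ℂ) * (j : ℕ)) ^ (m - j)
          = ((α : ℂ) + (β : ℂ) * (j : ℕ)) ^ m := by rw [← pow_add]; congr 1; omega
      have hchoose : (m.factorial : ℂ) = (m.choose j : ℂ) * (j.factorial : ℂ) *
          ((m - j).factorial : ℂ) := by
        exact_mod_cast (Nat.choose_mul_factorial_mul_factorial hjm).symm
      have hjf : (j.factorial : ℂ) ≠ 0 := Nat.cast_ne_zero.mpr j.factorial_pos.ne'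
      have hmjf : ((m - j).factorial : ℂ) ≠ 0 := Nat.cast_ne_zero.mpr (m - j).factorial_pos.ne'
      have hC : (m.choose j : ℂ) ≠ 0 := Nat.cast_ne_zero.mpr (Nat.choose_pos hjm).ne'
      simp only [hu]
      rw [neg_mul, neg_pow, mul_pow, hchoose]
      rw [← hz, ← hd]
      field_simp
    rw [Finset.sum_congr rfl hstep, ← Finset.mul_sum]
    rw [sum_alt_choose_pow m (α : ℂ) (β : ℂ)]
    rw [mul_pow]
    field_simp
  rw [hA, hB]
  apply tsum_geometric_of_norm_lt_one
  rw [norm_mul, Complex.norm_real, Real.norm_eq_abs, abs_of_pos hβ]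
  nlinarith [norm_nonneg z]

end SmallBall

section Identity

open Finset Function

lemma one_sub_ne_zero_on_dom {β : ℝ} {w : ℂ} (hw : w ∈ dom β) : (1 : ℂ) - (β : ℂ) * w ≠ 0 := by
  intro h0
  have h1 : (β : ℂ) * w = 1 := by
    have := sub_eq_zero.mp h0
    exact this.symm
  have h2 : β * w.re = 1 := by
    have := congrArg Complex.re h1
    rwa [Complex.re_ofReal_mul] at this
  exact absurd h2 (ne_of_lt hw.1)

lemma Fc_eq_on_dom {α β : ℝ} (hα : 0 < α) (hβ : 0 < β) (hβ1 : β < 1) {z : ℂ}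
    (hz : z ∈ dom β) : Fc α β z = (1 - (β : ℂ) * z)⁻¹ := by
  have hF : AnalyticOnNhd ℂ (Fc α β) (dom β) :=
    (diffOn_Fc hα hβ).analyticOnNhd (isOpen_dom β)
  have hHdiff : DifferentiableOn ℂ (fun w : ℂ => (1 - (β : ℂ) * w)⁻¹) (dom β) := by
    apply DifferentiableOn.inv
    · exact ((differentiable_const _).sub ((differentiable_const _).mul differentiable_id)).differentiableOn
    · exact fun w hw => one_sub_ne_zero_on_dom hw
  have hH : AnalyticOnNhd ℂ (fun w : ℂ => (1 - (β : ℂ) * w)⁻¹) (dom β) :=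
    hHdiff.analyticOnNhd (isOpen_dom β)
  obtain ⟨ε, hε, hball⟩ := Fc_eq_on_ball hα hβ hβ1
  have heq : Fc α β =ᶠ[nhds (0:ℂ)] fun w => (1 - (β : ℂ) * w)⁻¹ := by
    apply Filter.eventuallyEq_of_mem (Metric.ball_mem_nhds (0:ℂ) hε)
    intro w hw
    exact hball w (by simpa [Metric.mem_ball, dist_zero_right] using hw)
  exact hF.eqOn_of_preconnected_of_eventuallyEq hH (isPreconnected_dom hβ.le)
    (zero_mem_dom (β := β)) heq hz

end Identity

theorem SJ_one (a β α : ℝ) (ha₁ : 1 < a) (ha₂ : a ≤ Real.exp 1)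
    (hβ₀ : 0 ≤ β) (hβ₁ : β < 1) (hα : 0 < α) :
    SJ 1 α β a = 1 / (1 - β * Real.log a) := by
  set t := Real.log a with htdef
  have ha0 : 0 < a := lt_trans one_pos ha₁
  have ht0 : 0 < t := Real.log_pos ha₁
  have ht1 : t ≤ 1 := by
    calc t ≤ Real.log (Real.exp 1) := (Real.log_le_log_iff ha0 (Real.exp_pos 1)).mpr ha₂
      _ = 1 := Real.log_exp 1
  have hβt : β * t < 1 := by nlinarith
  have hSJ : SJ 1 α β a = ∑' k : ℕ, (1 / (k.factorial : ℝ)) * t ^ k * (α + β * k) ^ k *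
      Real.exp (-(α + β * k) * t) := by
    unfold SJ
    apply tsum_congr
    intro k
    have h1 : ((k : ℤ) + ((1:ℕ) : ℤ) - 1) = (k : ℤ) := by push_cast; ring
    rw [h1, zpow_natCast]
    congr 1
    rw [Real.rpow_def_of_pos ha0]
    congr 1
    rw [← htdef]
    ring
  rcases eq_or_lt_of_le hβ₀ with hβ0 | hβpos
  · -- β = 0
    rw [hSJ, ← hβ0]
    simp only [zero_mul, add_zero, sub_zero]
    have hterm : ∀ k : ℕ, (1 / (k.factorial : ℝ)) * t ^ k * α ^ k * Real.exp (-α * t)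
        = (α * t) ^ k / k.factorial * Real.exp (-α * t) := by
      intro k; rw [mul_pow]; ring
    rw [tsum_congr hterm, tsum_mul_right, exp_tsum_real (α * t), ← Real.exp_add]
    simp
  · -- β > 0
    have hdom : ((t : ℝ) : ℂ) ∈ dom β := real_mem_dom hβpos.le ht0.le hβt
    have hc := Fc_eq_on_dom hα hβpos hβ₁ hdom
    have hne : (1 : ℝ) - β * t ≠ 0 := by nlinarith
    apply Complex.ofReal_injective
    have hcast : ((SJ 1 α β a : ℝ) : ℂ) = Fc α β ((t : ℝ) : ℂ) := by
      rw [hSJ, Complex.ofReal_tsum]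
      unfold Fc fterm
      apply tsum_congr
      intro k
      push_cast [Complex.ofReal_exp]
      ring_nf
    rw [hcast, hc]
    rw [Complex.ofReal_div]
    push_cast
    rw [one_div]
end

section
/- For all real a, β, α with 1 < a ≤ e, 0 ≤ β < 1 and α > 0, one has S(2,α,β,a) = α/(1 − β·log a)² + β²·log a/(1 − β·log a)³. -/
open Finset fwdDiff

lemma fwdDiff_pow_eval (j : ℕ) :
    Δ_[(1:ℝ)] (fun y : ℝ => y ^ j) =
      ∑ i ∈ Finset.range j, (j.choose i : ℝ) • (fun y : ℝ => y ^ i) := by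
  funext y
  simp only [fwdDiff, Finset.sum_apply, Pi.smul_apply, smul_eq_mul]
  rw [add_pow]
  rw [Finset.sum_range_succ]
  simp only [Nat.choose_self, Nat.cast_one, mul_one, one_pow, pow_zero]
  rw [add_sub_cancel_right]
  exact Finset.sum_congr rfl fun i _ => by ring

lemma fwdDiff_iter_pow_lt : ∀ n, ∀ j < n, (Δ_[(1:ℝ)])^[n] (fun y : ℝ => y ^ j) = fun _ => 0 := by
  intro n
  induction n with
  | zero => intro j hj; omega
  | succ n ih =>
    intro j hj
    rw [Function.iterate_succ_apply, fwdDiff_pow_eval, fwdDiff_iter_finset_sum]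
    funext y
    rw [Finset.sum_apply]
    apply Finset.sum_eq_zero
    intro i hi
    rw [fwdDiff_iter_const_smul, ih i (by simp at hi; omega)]
    simp

lemma fwdDiff_iter_pow_self : ∀ n, (Δ_[(1:ℝ)])^[n] (fun y : ℝ => y ^ n) = fun _ => (n.factorial : ℝ) := by
  intro n
  induction n with
  | zero => funext y; simp
  | succ n ih =>
    rw [Function.iterate_succ_apply, fwdDiff_pow_eval, fwdDiff_iter_finset_sum]
    funext y
    rw [Finset.sum_apply, Finset.sum_range_succ]
    have h0 : ∀ i ∈ Finset.range n,
        ((Δ_[(1:ℝ)])^[n] (((n+1).choose i : ℝ) • fun y : ℝ => y ^ i)) y = 0 := by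
      intro i hi
      rw [fwdDiff_iter_const_smul, fwdDiff_iter_pow_lt n i (Finset.mem_range.mp hi)]
      simp
    rw [Finset.sum_congr rfl h0, Finset.sum_const_zero, zero_add, fwdDiff_iter_const_smul, ih]
    simp only [Pi.smul_apply, smul_eq_mul, Nat.choose_succ_self_right, Nat.factorial_succ]
    push_cast
    ring

lemma fwdDiff_iter_pow_succ : ∀ n, (Δ_[(1:ℝ)])^[n] (fun y : ℝ => y ^ (n+1)) 0
    = (n.factorial : ℝ) * (n * (n+1) / 2) := by
  intro n
  induction n with
  | zero => simp
  | succ n ih =>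
    rw [Function.iterate_succ_apply, fwdDiff_pow_eval, fwdDiff_iter_finset_sum]
    rw [Finset.sum_apply, Finset.sum_range_succ, Finset.sum_range_succ]
    have h0 : ∀ i ∈ Finset.range n,
        ((Δ_[(1:ℝ)])^[n] (((n+2).choose i : ℝ) • fun y : ℝ => y ^ i)) 0 = 0 := by
      intro i hi
      rw [fwdDiff_iter_const_smul, fwdDiff_iter_pow_lt n i (Finset.mem_range.mp hi)]
      simp
    rw [Finset.sum_congr rfl h0, Finset.sum_const_zero, zero_add]
    rw [fwdDiff_iter_const_smul, fwdDiff_iter_const_smul, fwdDiff_iter_pow_self n]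
    rw [show n + 1 + 1 = n + 2 from rfl]
    simp only [Pi.smul_apply, smul_eq_mul]
    rw [ih]
    have hc1 : ((n+2).choose n : ℝ) = (n+2)*(n+1)/2 := by
      have : (n+2).choose n = (n+2).choose 2 := by
        exact Nat.choose_symm_of_eq_add (by omega)
      rw [this, Nat.cast_choose_two]
      push_cast; ring
    have hc2 : ((n+2).choose (n+1) : ℝ) = (n+2) := by
      rw [show (n+2).choose (n+1) = (n+1)+1 from by
        rw [show n + 2 = (n+1) + 1 from rfl, Nat.choose_succ_self_right]]
      push_cast; ring
    rw [hc1, hc2, Nat.factorial_succ]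
    push_cast
    ring

lemma inner_sum_eval (α β : ℝ) (n : ℕ) :
    ∑ k ∈ Finset.range (n+1), ((-1:ℝ))^(n-k) * (n.choose k) * (α+β*k)^(n+1)
      = n.factorial * ((n+1)*α*β^n + β^(n+1)*(n*(n+1)/2)) := by
  have key := fwdDiff_iter_eq_sum_shift (1:ℝ) (fun y : ℝ => (α+β*y)^(n+1)) n 0
  have hL : (Δ_[(1:ℝ)])^[n] (fun y : ℝ => (α+β*y)^(n+1)) 0
      = ∑ k ∈ Finset.range (n+1), ((-1:ℝ))^(n-k) * (n.choose k) * (α+β*k)^(n+1) := by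
    rw [key]
    refine Finset.sum_congr rfl fun k _ => ?_
    rw [zsmul_eq_mul]
    push_cast
    ring_nf
  rw [← hL]
  have hf : (fun y : ℝ => (α+β*y)^(n+1))
      = ∑ j ∈ Finset.range (n+2), (((n+1).choose j : ℝ) * β^j * α^(n+1-j)) • (fun y : ℝ => y^j) := by
    funext y
    rw [Finset.sum_apply]
    have := add_pow (β*y) α (n+1)
    simp only [Pi.smul_apply, smul_eq_mul]
    rw [add_comm α (β*y), this]
    refine Finset.sum_congr rfl fun j _ => ?_
    rw [mul_pow]
    ring
  rw [hf, fwdDiff_iter_finset_sum, Finset.sum_apply, Finset.sum_range_succ, Finset.sum_range_succ]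
  have h0 : ∀ j ∈ Finset.range n,
      ((Δ_[(1:ℝ)])^[n] ((((n+1).choose j : ℝ) * β^j * α^(n+1-j)) • fun y : ℝ => y^j)) 0 = 0 := by
    intro j hj
    rw [fwdDiff_iter_const_smul, fwdDiff_iter_pow_lt n j (Finset.mem_range.mp hj)]
    simp
  rw [Finset.sum_congr rfl h0, Finset.sum_const_zero, zero_add]
  rw [fwdDiff_iter_const_smul, fwdDiff_iter_const_smul, fwdDiff_iter_pow_self n]
  simp only [Pi.smul_apply, smul_eq_mul]
  rw [fwdDiff_iter_pow_succ n]
  have hc : ((n+1).choose n : ℝ) = (n+1) := by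
    rw [show (n+1).choose n = n+1 from by rw [Nat.choose_succ_self_right]]
    push_cast; ring
  rw [hc]
  rw [Nat.choose_self]
  rw [show n + 1 - n = 1 from by omega, show n + 1 - (n+1) = 0 from by omega]
  push_cast
  ring
open Finset

lemma pow_div_factorial_le_exp (y : ℝ) (hy : 0 ≤ y) (n : ℕ) :
    y^n / n.factorial ≤ Real.exp y := by
  calc y^n / n.factorial ≤ ∑ i ∈ Finset.range (n+1), y^i / i.factorial := by
        refine Finset.single_le_sum (f := fun i => y^i / i.factorial)
          (fun i _ => by positivity) (Finset.self_mem_range_succ n)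
    _ ≤ Real.exp y := Real.sum_le_exp_of_nonneg hy (n+1)

lemma real_exp_tsum (y : ℝ) : Real.exp y = ∑' m : ℕ, y^m / m.factorial := by
  rw [Real.exp_eq_exp_ℝ, NormedSpace.exp_eq_tsum_div]

section
variable (α β x : ℝ)

noncomputable def Pfun : ℕ × ℕ → ℝ := fun p =>
  (-1:ℝ)^p.2 * x^(p.1+p.2) * (α+β*p.1)^(p.1+p.2+1) / (p.1.factorial * p.2.factorial)

lemma Pfun_row (k m : ℕ) :
    Pfun α β x (k, m) = ((1/(k.factorial:ℝ)) * x^k * (α+β*k)^(k+1)) *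
      ((-((α+β*k)*x))^m / m.factorial) := by
  have hk : (k.factorial:ℝ) ≠ 0 := Nat.cast_ne_zero.mpr k.factorial_ne_zero
  have hm : (m.factorial:ℝ) ≠ 0 := Nat.cast_ne_zero.mpr m.factorial_ne_zero
  simp only [Pfun]
  rw [pow_add x k m, show k + m + 1 = (k+1) + m from by omega, pow_add (α+β*k) (k+1) m,
    neg_pow ((α+β*(k:ℝ))*x) m, mul_pow ((α:ℝ)+β*k) x m]
  field_simp

lemma Pfun_diag_term (n k : ℕ) (hkn : k ≤ n) :
    Pfun α β x (k, n - k) = (x^n/n.factorial) *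
      ((-1:ℝ)^(n-k) * (n.choose k) * (α+β*k)^(n+1)) := by
  have hk : (k.factorial:ℝ) ≠ 0 := Nat.cast_ne_zero.mpr k.factorial_ne_zero
  have hm : ((n-k).factorial:ℝ) ≠ 0 := Nat.cast_ne_zero.mpr (n-k).factorial_ne_zero
  have hn : (n.factorial:ℝ) ≠ 0 := Nat.cast_ne_zero.mpr n.factorial_ne_zero
  simp only [Pfun]
  rw [show k + (n - k) = n from by omega, Nat.cast_choose ℝ hkn]
  field_simp

end

open Finset in
lemma small_x_identity (α β : ℝ) (hα : 0 < α) (hβ0 : 0 ≤ β) (hβ1 : β ≤ 1) {x : ℝ}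
    (hx0 : 0 < x) (hx : 2 * Real.exp 1 * x < 1) :
    ∑' k : ℕ, (1/(k.factorial:ℝ)) * x^k * (α+β*k)^(k+1) * Real.exp (-((α+β*k)*x))
      = α / (1-β*x)^2 + β^2*x / (1-β*x)^3 := by
  have he1 : (1:ℝ) < Real.exp 1 := by
    have := Real.exp_one_gt_d9; linarith
  have hx1 : x < 1 := by nlinarith
  set P := Pfun α β x with hP
  set r : ℝ := 2 * Real.exp 1 * x with hr
  have hr0 : 0 ≤ r := by positivity
  have hr1 : ‖r‖ < 1 := by rw [Real.norm_eq_abs, abs_of_nonneg hr0]; exact hx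
  set t : ℝ := β * x with ht
  have ht0 : 0 ≤ t := by positivity
  have ht1 : t < 1 := by nlinarith
  have htn : ‖t‖ < 1 := by rw [Real.norm_eq_abs, abs_of_nonneg ht0]; exact ht1
  have hαβ : ∀ k : ℕ, 0 < α + β * k := fun k => by positivity
  -- bound for row sums of |P| over antidiagonals
  have hu : Summable (fun n : ℕ => Real.exp α * ((α+n) * r^n)) := by
    apply Summable.mul_left
    have h1 : Summable (fun n : ℕ => (n:ℝ) * r^n) := by
      have := summable_pow_mul_geometric_of_norm_lt_one (R := ℝ) 1 hr1
      simpa using this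
    have h2 : Summable (fun n : ℕ => α * r^n) :=
      (summable_geometric_of_norm_lt_one hr1).mul_left α
    exact ((h2.add h1).congr (fun n => by ring))
  have hfibbound : ∀ n : ℕ, ∑ k ∈ Finset.range (n+1), |P (k, n-k)|
      ≤ Real.exp α * ((α+n) * r^n) := by
    intro n
    have step1 : ∀ k ∈ Finset.range (n+1),
        |P (k, n-k)| ≤ x^n * (α+n)^(n+1) * ((n.choose k : ℝ)/ n.factorial) := by
      intro k hk
      have hkn : k ≤ n := Nat.lt_succ_iff.mp (Finset.mem_range.mp hk)
      rw [hP, Pfun_diag_term α β x n k hkn, abs_mul, abs_mul, abs_mul]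
      have h1 : |x^n/(n.factorial:ℝ)| = x^n/n.factorial := abs_of_nonneg (by positivity)
      have h2 : |(-1:ℝ)^(n-k)| = 1 := by
        rw [abs_pow, abs_neg, abs_one, one_pow]
      have h3 : |(n.choose k : ℝ)| = (n.choose k : ℝ) := abs_of_nonneg (by positivity)
      have h4 : |(α+β*k)^(n+1)| = (α+β*k)^(n+1) := abs_of_nonneg (by positivity)
      rw [h1, h2, h3, h4]
      have hbase : α + β*k ≤ α + n := by
        have : β * k ≤ (n:ℝ) := by
          have hk' : (k:ℝ) ≤ n := by exact_mod_cast hkn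
          nlinarith
        linarith
      have hpow : (α+β*k)^(n+1) ≤ (α+n)^(n+1) :=
        pow_le_pow_left₀ (hαβ k).le hbase (n+1)
      have hnn : (0:ℝ) ≤ x^n * ((n.choose k : ℝ)/n.factorial) := by positivity
      calc x^n/(n.factorial:ℝ) * (1 * (n.choose k:ℝ) * (α+β*k)^(n+1))
          = (α+β*k)^(n+1) * (x^n * ((n.choose k : ℝ)/n.factorial)) := by ring
        _ ≤ (α+n)^(n+1) * (x^n * ((n.choose k : ℝ)/n.factorial)) := by
            exact mul_le_mul_of_nonneg_right hpow hnn
        _ = x^n * (α+n)^(n+1) * ((n.choose k : ℝ)/ n.factorial) := by ring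
    calc ∑ k ∈ Finset.range (n+1), |P (k, n-k)|
        ≤ ∑ k ∈ Finset.range (n+1), x^n * (α+n)^(n+1) * ((n.choose k : ℝ)/ n.factorial) :=
          Finset.sum_le_sum step1
      _ = x^n * (α+n)^(n+1) / n.factorial * ∑ k ∈ Finset.range (n+1), (n.choose k : ℝ) := by
          rw [Finset.mul_sum]; exact Finset.sum_congr rfl fun k _ => by ring
      _ = x^n * (α+n)^(n+1) / n.factorial * 2^n := by
          norm_cast
          rw [Nat.sum_range_choose]
      _ ≤ Real.exp α * ((α+n) * r^n) := by
          have hexp : (α+n)^n / n.factorial ≤ Real.exp (α+n) :=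
            pow_div_factorial_le_exp (α+n) (by positivity) n
          have hexp2 : Real.exp (α+(n:ℝ)) = Real.exp α * (Real.exp 1)^n := by
            rw [Real.exp_add]
            congr 1
            rw [← Real.exp_nat_mul]
            norm_num
          have hrn : r^n = 2^n * (Real.exp 1)^n * x^n := by
            rw [hr, mul_pow, mul_pow]
          rw [hrn]
          have key : x^n * (α+n)^(n+1) / n.factorial * 2^n
              = (α+n) * ((α+n)^n/n.factorial) * (2^n * x^n) := by
            rw [pow_succ]; ring
          rw [key]
          have h2 : (α+n) * ((α+n)^n/n.factorial) * (2^n * x^n)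
              ≤ (α+n) * Real.exp (α+n) * (2^n * x^n) := by
            have : (0:ℝ) ≤ (α+n) := by positivity
            have : (0:ℝ) ≤ 2^n * x^n := by positivity
            apply mul_le_mul_of_nonneg_right _ this
            apply mul_le_mul_of_nonneg_left hexp (by positivity)
          refine h2.trans ?_
          rw [hexp2]
          apply le_of_eq
          ring
  -- summability of |P|
  have hPabs : Summable (fun p : ℕ × ℕ => |P p|) := by
    refine Finset.HasAntidiagonal.sigmaAntidiagonalEquivProd.summable_iff.mp ?_
    refine (summable_sigma_of_nonneg fun _ => abs_nonneg _).mpr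
      ⟨fun n => Summable.of_finite, ?_⟩
    refine Summable.of_nonneg_of_le (fun n => tsum_nonneg fun c => abs_nonneg _) ?_ hu
    intro n
    have heq : ∑' (c : Finset.HasAntidiagonal.antidiagonal n),
        |P ((Finset.HasAntidiagonal.sigmaAntidiagonalEquivProd (A := ℕ)) ⟨n, c⟩)|
        = ∑ p ∈ Finset.HasAntidiagonal.antidiagonal n, |P p| :=
      Finset.tsum_subtype (Finset.HasAntidiagonal.antidiagonal n) (fun p => |P p|)
    rw [show (fun (c : Finset.HasAntidiagonal.antidiagonal n) =>
        |P ((Finset.HasAntidiagonal.sigmaAntidiagonalEquivProd (A := ℕ)) ⟨n, c⟩)|)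
        = fun (c : Finset.HasAntidiagonal.antidiagonal n) => |P c.val| from rfl] at heq ⊢
    rw [heq, Finset.Nat.sum_antidiagonal_eq_sum_range_succ_mk]
    exact hfibbound n
  have hPsum : Summable P := hPabs.of_abs
  -- row sums
  have hfib : ∀ k : ℕ, Summable (fun m => P (k, m)) := by
    intro k
    apply Summable.congr
      (((Real.summable_pow_div_factorial (-((α+β*k)*x))).mul_left
        ((1/(k.factorial:ℝ)) * x^k * (α+β*k)^(k+1))))
    intro m
    rw [hP, Pfun_row]
  have hrow : ∀ k : ℕ, (∑' m, P (k, m))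
      = (1/(k.factorial:ℝ)) * x^k * (α+β*k)^(k+1) * Real.exp (-((α+β*k)*x)) := by
    intro k
    calc (∑' m, P (k, m))
        = ∑' m : ℕ, ((1/(k.factorial:ℝ)) * x^k * (α+β*k)^(k+1)) *
            ((-((α+β*k)*x))^m / m.factorial) := tsum_congr fun m => Pfun_row α β x k m
      _ = ((1/(k.factorial:ℝ)) * x^k * (α+β*k)^(k+1)) *
            ∑' m : ℕ, ((-((α+β*k)*x))^m / m.factorial) := tsum_mul_left
      _ = (1/(k.factorial:ℝ)) * x^k * (α+β*k)^(k+1) * Real.exp (-((α+β*k)*x)) := by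
          rw [← real_exp_tsum]
  -- diagonal sums
  have hrowdiag : ∀ n : ℕ, (∑ p ∈ Finset.HasAntidiagonal.antidiagonal n, P p)
      = α * (((n+1).choose 1 : ℝ) * t^n)
        + β * ((((n+2).choose 2 : ℝ) * t^n) - (((n+1).choose 1 : ℝ) * t^n)) := by
    intro n
    rw [Finset.Nat.sum_antidiagonal_eq_sum_range_succ_mk]
    have hterm : ∀ k ∈ Finset.range (n+1), P (k, n-k) = (x^n/n.factorial) *
        ((-1:ℝ)^(n-k) * (n.choose k) * (α+β*k)^(n+1)) := fun k hk =>
      Pfun_diag_term α β x n k (Nat.lt_succ_iff.mp (Finset.mem_range.mp hk))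
    rw [Finset.sum_congr rfl hterm, ← Finset.mul_sum, inner_sum_eval]
    have hn : (n.factorial:ℝ) ≠ 0 := Nat.cast_ne_zero.mpr n.factorial_ne_zero
    rw [Nat.choose_one_right, Nat.cast_choose_two]
    have htpow : t^n = β^n * x^n := by rw [ht, mul_pow]
    rw [htpow]
    push_cast
    field_simp
    ring
  -- geometric series values
  have hS1 : HasSum (fun n : ℕ => ((n+1).choose 1 : ℝ) * t^n) (1/(1-t)^2) :=
    hasSum_choose_mul_geometric_of_norm_lt_one 1 htn
  have hS2 : HasSum (fun n : ℕ => ((n+2).choose 2 : ℝ) * t^n) (1/(1-t)^3) :=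
    hasSum_choose_mul_geometric_of_norm_lt_one 2 htn
  have hrowsum : HasSum (fun n : ℕ => ∑ p ∈ Finset.HasAntidiagonal.antidiagonal n, P p)
      (α * (1/(1-t)^2) + β * (1/(1-t)^3 - 1/(1-t)^2)) := by
    have h := (hS1.mul_left α).add ((hS2.sub hS1).mul_left β)
    simp only [hrowdiag]
    exact h
  have hdiagsum : Summable ((fun p => P p) ∘ (Finset.HasAntidiagonal.sigmaAntidiagonalEquivProd (A := ℕ))) :=
    Finset.HasAntidiagonal.sigmaAntidiagonalEquivProd.summable_iff.mpr hPsum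
  have h1t : (1 - t) ≠ 0 := by linarith
  calc ∑' k : ℕ, (1/(k.factorial:ℝ)) * x^k * (α+β*k)^(k+1) * Real.exp (-((α+β*k)*x))
      = ∑' k : ℕ, ∑' m : ℕ, P (k, m) := tsum_congr fun k => (hrow k).symm
    _ = ∑' p : ℕ × ℕ, P p := (Summable.tsum_prod' hPsum hfib).symm
    _ = ∑' s : Σ n : ℕ, Finset.HasAntidiagonal.antidiagonal n, P (Finset.HasAntidiagonal.sigmaAntidiagonalEquivProd s) :=
        (Finset.HasAntidiagonal.sigmaAntidiagonalEquivProd.tsum_eq P).symm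
    _ = ∑' n : ℕ, ∑' c : Finset.HasAntidiagonal.antidiagonal n,
          P (Finset.HasAntidiagonal.sigmaAntidiagonalEquivProd ⟨n, c⟩) :=
        Summable.tsum_sigma' (fun n => Summable.of_finite) hdiagsum
    _ = ∑' n : ℕ, ∑ p ∈ Finset.HasAntidiagonal.antidiagonal n, P p :=
        tsum_congr fun n => Finset.tsum_subtype (Finset.HasAntidiagonal.antidiagonal n) (fun p => P p)
    _ = α * (1/(1-t)^2) + β * (1/(1-t)^3 - 1/(1-t)^2) := hrowsum.tsum_eq
    _ = α / (1-t)^2 + β^2*x / (1-t)^3 := by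
        rw [ht]
        field_simp
        ring

lemma mono_ue {u u₀ : ℝ} (h0 : 0 ≤ u) (h1 : u ≤ u₀) (h2 : u₀ ≤ 1) :
    u * Real.exp (1-u) ≤ u₀ * Real.exp (1-u₀) := by
  have key : u ≤ u₀ * Real.exp (u-u₀) := by
    have h3 : (u-u₀) + 1 ≤ Real.exp (u-u₀) := Real.add_one_le_exp _
    nlinarith [Real.exp_pos (u-u₀)]
  calc u * Real.exp (1-u) ≤ (u₀ * Real.exp (u-u₀)) * Real.exp (1-u) := by
        exact mul_le_mul_of_nonneg_right key (Real.exp_pos _).le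
    _ = u₀ * Real.exp (1-u₀) := by
        rw [mul_assoc, ← Real.exp_add]
        ring_nf

lemma pow_div_factorial_le_exp' (y : ℝ) (hy : 0 ≤ y) (n : ℕ) :
    y^n / n.factorial ≤ Real.exp y := by
  calc y^n / n.factorial ≤ ∑ i ∈ Finset.range (n+1), y^i / i.factorial := by
        refine Finset.single_le_sum (f := fun i => y^i / i.factorial)
          (fun i _ => by positivity) (Finset.self_mem_range_succ n)
    _ ≤ Real.exp y := Real.sum_le_exp_of_nonneg hy (n+1)

lemma apow_bound {α β : ℝ} (hα : 0 < α) (hβ : 0 < β) (k : ℕ) :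
    (α + β*k)^k ≤ Real.exp (α/β) * (β*k)^k := by
  rcases Nat.eq_zero_or_pos k with rfl | hk
  · simpa using Real.one_le_exp (by positivity)
  · have hk' : (0:ℝ) < k := by exact_mod_cast hk
    have hbk : (0:ℝ) < β*k := by positivity
    have h1 : α + β*k ≤ (β*k) * Real.exp (α/(β*k)) := by
      have := Real.add_one_le_exp (α/(β*k))
      have h2 : (β*k) * (α/(β*k) + 1) ≤ (β*k) * Real.exp (α/(β*k)) :=
        mul_le_mul_of_nonneg_left this hbk.le
      calc α + β*k = (β*k) * (α/(β*k) + 1) := by field_simp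
        _ ≤ _ := h2
    calc (α + β*k)^k ≤ ((β*k) * Real.exp (α/(β*k)))^k :=
          pow_le_pow_left₀ (by positivity) h1 k
      _ = Real.exp (α/β) * (β*k)^k := by
          rw [mul_pow, ← Real.exp_nat_mul]
          have : (k:ℝ) * (α/(β*k)) = α/β := by field_simp
          rw [this, mul_comm]

lemma gnorm_bound {α β δ : ℝ} (hα : 0 < α) (hβ : 0 < β) (hδ : 0 < δ)
    (hu0 : β*(1+2*δ) ≤ 1) (k : ℕ) {z : ℂ}
    (h1 : 0 < z.re) (h2 : z.re < 1+δ) (h3 : |z.im| < δ) :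
    ‖(1/(k.factorial:ℂ)) * z^k * ((α:ℂ)+(β:ℂ)*k)^(k+1) *
        Complex.exp (-(((α:ℂ)+(β:ℂ)*k)*z))‖
      ≤ Real.exp (α/β) * ((α+β*k) * (β*(1+2*δ)*Real.exp (1-β))^k) := by
  set A : ℝ := α + β*k with hA
  have hApos : 0 < A := by positivity
  set s : ℝ := z.re with hs
  have hcast : ((α:ℂ)+(β:ℂ)*k) = ((A:ℝ):ℂ) := by rw [hA]; norm_cast
  have hnorm : ‖(1/(k.factorial:ℂ)) * z^k * ((α:ℂ)+(β:ℂ)*k)^(k+1) *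
      Complex.exp (-(((α:ℂ)+(β:ℂ)*k)*z))‖
      = (1/(k.factorial:ℝ)) * ‖z‖^k * A^(k+1) * Real.exp (-(A*s)) := by
    rw [hcast]
    rw [norm_mul, norm_mul, norm_mul, norm_pow, norm_pow]
    have e1 : ‖(1/(k.factorial:ℂ))‖ = 1/(k.factorial:ℝ) := by
      rw [norm_div, norm_one, Complex.norm_natCast]
    have e2 : ‖((A:ℝ):ℂ)‖ = A := by
      rw [Complex.norm_real, Real.norm_eq_abs, abs_of_pos hApos]
    have e3 : ‖Complex.exp (-(((A:ℝ):ℂ)*z))‖ = Real.exp (-(A*s)) := by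
      rw [Complex.norm_exp]
      congr 1
      simp [Complex.neg_re, Complex.re_ofReal_mul, hs]
    rw [e1, e2, e3]
  rw [hnorm]
  have habs : ‖z‖ ≤ s + δ := by
    calc ‖z‖ ≤ |z.re| + |z.im| := Complex.norm_le_abs_re_add_abs_im z
      _ ≤ s + δ := by rw [abs_of_pos h1]; linarith
  have hsd : (0:ℝ) < s + δ := by linarith
  have hexp_split : Real.exp (-(A*s)) ≤ (Real.exp (-(β*s)))^k := by
    have heq : Real.exp (-(A*s)) = Real.exp (-(α*s)) * (Real.exp (-(β*s)))^k := by
      rw [← Real.exp_nat_mul, ← Real.exp_add]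
      congr 1
      rw [hA]; ring
    rw [heq]
    have h4 : Real.exp (-(α*s)) ≤ 1 := Real.exp_le_one_iff.mpr (by nlinarith)
    nlinarith [pow_pos (Real.exp_pos (-(β*s))) k]
  have hf : (0:ℝ) < k.factorial := by exact_mod_cast k.factorial_pos
  have hz : ‖z‖^k ≤ (s+δ)^k := pow_le_pow_left₀ (norm_nonneg z) habs k
  have hAk : A^k ≤ Real.exp (α/β) * (β*k)^k := apow_bound hα hβ k
  have hkk : ((k:ℝ))^k ≤ (Real.exp 1)^k * k.factorial := by
    have h6 := pow_div_factorial_le_exp' (k:ℝ) (Nat.cast_nonneg k) k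
    have hek : Real.exp (k:ℝ) = (Real.exp 1)^k := by
      rw [← Real.exp_nat_mul]; norm_num
    rw [hek] at h6
    calc ((k:ℝ))^k = (((k:ℝ))^k / k.factorial) * k.factorial := by field_simp
      _ ≤ (Real.exp 1)^k * k.factorial := mul_le_mul_of_nonneg_right h6 hf.le
  have step : (1/(k.factorial:ℝ)) * A^(k+1) ≤ A * Real.exp (α/β) * (β * Real.exp 1)^k := by
    rw [div_mul_eq_mul_div, one_mul, div_le_iff₀ hf, pow_succ]
    have h6 : (β*(k:ℝ))^k ≤ β^k * ((Real.exp 1)^k * k.factorial) := by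
      rw [mul_pow]
      exact mul_le_mul_of_nonneg_left hkk (by positivity)
    calc A^k * A ≤ (Real.exp (α/β) * (β^k * ((Real.exp 1)^k * k.factorial))) * A := by
          refine mul_le_mul_of_nonneg_right (hAk.trans ?_) hApos.le
          exact mul_le_mul_of_nonneg_left h6 (Real.exp_pos _).le
      _ = A * Real.exp (α/β) * (β * Real.exp 1)^k * k.factorial := by
          rw [mul_pow]; ring
  have main : (1/(k.factorial:ℝ)) * ‖z‖^k * A^(k+1) * Real.exp (-(A*s))
      ≤ A * Real.exp (α/β) * (β * Real.exp 1 * (s+δ) * Real.exp (-(β*s)))^k := by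
    calc (1/(k.factorial:ℝ)) * ‖z‖^k * A^(k+1) * Real.exp (-(A*s))
        = ((1/(k.factorial:ℝ)) * A^(k+1)) * (‖z‖^k * Real.exp (-(A*s))) := by ring
      _ ≤ (A * Real.exp (α/β) * (β * Real.exp 1)^k) * ((s+δ)^k * (Real.exp (-(β*s)))^k) := by
          apply mul_le_mul step _ (by positivity) (by positivity)
          exact mul_le_mul hz hexp_split (Real.exp_pos _).le (by positivity)
      _ = A * Real.exp (α/β) * (β * Real.exp 1 * (s+δ) * Real.exp (-(β*s)))^k := by
          rw [mul_pow, mul_pow, mul_pow]; ring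
  refine main.trans ?_
  have hbnn : (0:ℝ) ≤ β * Real.exp 1 * (s+δ) * Real.exp (-(β*s)) := by
    have : (0:ℝ) ≤ β * Real.exp 1 := by positivity
    have h7 : (0:ℝ) ≤ β * Real.exp 1 * (s+δ) := mul_nonneg this hsd.le
    exact mul_nonneg h7 (Real.exp_pos _).le
  have hbase : β * Real.exp 1 * (s+δ) * Real.exp (-(β*s)) ≤ β*(1+2*δ)*Real.exp (1-β) := by
    have hcomb : Real.exp 1 * Real.exp (-(β*s))
        = Real.exp (1-(β*(s+δ))) * Real.exp (β*δ) := by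
      rw [← Real.exp_add, ← Real.exp_add]; congr 1; ring
    calc β * Real.exp 1 * (s+δ) * Real.exp (-(β*s))
        = (β*(s+δ)) * (Real.exp 1 * Real.exp (-(β*s))) := by ring
      _ = (β*(s+δ)) * Real.exp (1-(β*(s+δ))) * Real.exp (β*δ) := by rw [hcomb]; ring
      _ ≤ (β*(1+2*δ)) * Real.exp (1-(β*(1+2*δ))) * Real.exp (β*δ) := by
          apply mul_le_mul_of_nonneg_right _ (Real.exp_pos _).le
          exact mono_ue (by positivity) (by nlinarith) hu0
      _ = (β*(1+2*δ)) * Real.exp (1-(β*(1+2*δ)) + β*δ) := by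
          rw [mul_assoc, ← Real.exp_add]
      _ ≤ β*(1+2*δ)*Real.exp (1-β) := by
          apply mul_le_mul_of_nonneg_left _ (by positivity)
          apply Real.exp_le_exp.mpr
          nlinarith
  calc A * Real.exp (α/β) * (β * Real.exp 1 * (s+δ) * Real.exp (-(β*s)))^k
      ≤ A * Real.exp (α/β) * (β*(1+2*δ)*Real.exp (1-β))^k := by
        apply mul_le_mul_of_nonneg_left _ (by positivity)
        exact pow_le_pow_left₀ hbnn hbase k
    _ = Real.exp (α/β) * (A * (β*(1+2*δ)*Real.exp (1-β))^k) := by ring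

set_option maxHeartbeats 1000000 in
open Filter in
lemma main_pos (α β : ℝ) (hα : 0 < α) (hβ : 0 < β) (hβ1 : β < 1)
    (x₀ : ℝ) (hx₀ : 0 < x₀) (hx₁ : x₀ ≤ 1) :
    ∑' k : ℕ, (1/(k.factorial:ℝ)) * x₀^k * (α+β*k)^(k+1) * Real.exp (-((α+β*k)*x₀))
      = α/(1-β*x₀)^2 + β^2*x₀/(1-β*x₀)^3 := by
  have he1 : (1:ℝ) < Real.exp 1 := by have := Real.exp_one_gt_d9; linarith
  set c : ℝ := β * Real.exp (1-β) with hc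
  have hcpos : 0 < c := by positivity
  have hc1 : c < 1 := by
    have h := Real.add_one_lt_exp (x := β - 1) (by intro h; apply absurd h; intro h'; linarith)
    have h2 : β < Real.exp (β-1) := by linarith
    have h3 : Real.exp (β-1) * Real.exp (1-β) = 1 := by
      rw [← Real.exp_add]; norm_num
    nlinarith [Real.exp_pos (1-β)]
  set δ : ℝ := min ((1-c)/(2*β*Real.exp 1)) ((1-β)/(4*β)) with hδdef
  have hδ : 0 < δ := by
    apply lt_min
    · apply div_pos (by linarith) (by positivity)
    · apply div_pos (by linarith) (by positivity)
  have hδ1 : δ ≤ (1-c)/(2*β*Real.exp 1) := min_le_left _ _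
  have hδ2 : δ ≤ (1-β)/(4*β) := min_le_right _ _
  have hu0 : β*(1+2*δ) ≤ 1 := by
    have : 2*β*δ ≤ (1-β)/2 := by
      have := mul_le_mul_of_nonneg_left hδ2 (by positivity : (0:ℝ) ≤ 2*β)
      calc 2*β*δ ≤ 2*β*((1-β)/(4*β)) := this
        _ = (1-β)/2 := by field_simp; ring
    nlinarith
  set ρ : ℝ := β*(1+2*δ)*Real.exp (1-β) with hρdef
  have hρ0 : 0 < ρ := by positivity
  have hρ1 : ρ < 1 := by
    have hδe : 2*β*δ*Real.exp 1 ≤ 1-c := by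
      have := mul_le_mul_of_nonneg_left hδ1 (by positivity : (0:ℝ) ≤ 2*β*Real.exp 1)
      calc 2*β*δ*Real.exp 1 = 2*β*Real.exp 1 * δ := by ring
        _ ≤ 2*β*Real.exp 1 * ((1-c)/(2*β*Real.exp 1)) := this
        _ = 1-c := by field_simp
    have hsplit : Real.exp (1-β) = Real.exp 1 * Real.exp (-β) := by
      rw [← Real.exp_add]; ring_nf
    have hb1 : Real.exp (-β) < 1 := Real.exp_lt_one_iff.mpr (by linarith)
    have hρeq : ρ = c + 2*β*δ*Real.exp (1-β) := by rw [hρdef, hc]; ring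
    rw [hρeq, hsplit]
    nlinarith [Real.exp_pos (-β), Real.exp_pos 1]
  have hρn : ‖ρ‖ < 1 := by rw [Real.norm_eq_abs, abs_of_pos hρ0]; exact hρ1
  -- the domain
  set Ω : Set ℂ := {z : ℂ | 0 < z.re ∧ z.re < 1+δ ∧ |z.im| < δ} with hΩdef
  have hopen : IsOpen Ω := by
    have hset : Ω = (Complex.re ⁻¹' Set.Ioo 0 (1+δ)) ∩ (Complex.im ⁻¹' Set.Ioo (-δ) δ) := by
      ext z
      simp only [hΩdef, Set.mem_setOf_eq, Set.mem_inter_iff, Set.mem_preimage, Set.mem_Ioo, abs_lt]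
      tauto
    rw [hset]
    exact (isOpen_Ioo.preimage Complex.continuous_re).inter
      (isOpen_Ioo.preimage Complex.continuous_im)
  have hconv : Convex ℝ Ω := by
    have hset : Ω = (Complex.reCLM ⁻¹' Set.Ioo 0 (1+δ)) ∩ (Complex.imCLM ⁻¹' Set.Ioo (-δ) δ) := by
      ext z
      simp only [hΩdef, Set.mem_setOf_eq, Set.mem_inter_iff, Set.mem_preimage, Set.mem_Ioo,
        Complex.reCLM_apply, Complex.imCLM_apply, abs_lt]
      tauto
    rw [hset]
    exact ((convex_Ioo _ _).linear_preimage Complex.reCLM.toLinearMap).inter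
      ((convex_Ioo _ _).linear_preimage Complex.imCLM.toLinearMap)
  -- the functions
  set g : ℕ → ℂ → ℂ := fun k z => (1/(k.factorial:ℂ)) * z^k * ((α:ℂ)+(β:ℂ)*k)^(k+1) *
    Complex.exp (-(((α:ℂ)+(β:ℂ)*k)*z)) with hgdef
  set F : ℂ → ℂ := fun z => ∑' k : ℕ, g k z with hFdef
  set G : ℂ → ℂ := fun z => (α:ℂ)/(1-(β:ℂ)*z)^2 + (β:ℂ)^2*z/(1-(β:ℂ)*z)^3 with hGdef
  have husum : Summable (fun k : ℕ => Real.exp (α/β) * ((α+β*k) * ρ^k)) := by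
    apply Summable.mul_left
    have h1 : Summable (fun k : ℕ => (k:ℝ) * ρ^k) := by
      have := summable_pow_mul_geometric_of_norm_lt_one (R := ℝ) 1 hρn
      simpa using this
    have h2 : Summable (fun k : ℕ => ρ^k) := summable_geometric_of_norm_lt_one hρn
    have h3 : Summable (fun k : ℕ => α * ρ^k + β*((k:ℝ) * ρ^k)) :=
      (h2.mul_left α).add (h1.mul_left β)
    exact h3.congr (fun k => by ring)
  have hFdiff : DifferentiableOn ℂ F Ω := by
    apply Complex.differentiableOn_tsum_of_summable_norm husum _ hopen
    · intro k z hz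
      obtain ⟨h1, h2, h3⟩ := hz
      exact gnorm_bound hα hβ hδ hu0 k h1 h2 h3
    · intro k
      apply Differentiable.differentiableOn
      fun_prop
  have hden : ∀ z ∈ Ω, (1 - (β:ℂ)*z) ≠ 0 := by
    intro z hz h0
    obtain ⟨h1, h2, _⟩ := hz
    have hre : (1 - (β:ℂ)*z).re = 1 - β*z.re := by
      simp [Complex.sub_re, Complex.re_ofReal_mul]
    rw [h0] at hre
    have : β*z.re < 1 := by
      have hb : β*z.re < β*(1+δ) := by nlinarith
      have : β*(1+δ) < 1 := by nlinarith
      linarith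
    simp at hre
    linarith
  have hGdiff : DifferentiableOn ℂ G Ω := by
    apply DifferentiableOn.add
    · exact DifferentiableOn.div (differentiableOn_const _)
        (((differentiableOn_const (1:ℂ)).sub (differentiableOn_id.const_smul (β:ℂ))).pow 2)
        (fun z hz => pow_ne_zero 2 (by
          have := hden z hz
          simpa [smul_eq_mul] using this))
    · exact DifferentiableOn.div ((differentiableOn_id.const_smul ((β:ℂ)^2)).congr
          (fun z _ => by simp [smul_eq_mul]))
        (((differentiableOn_const (1:ℂ)).sub (differentiableOn_id.const_smul (β:ℂ))).pow 3)
        (fun z hz => pow_ne_zero 3 (by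
          have := hden z hz
          simpa [smul_eq_mul] using this))
  have hFan : AnalyticOnNhd ℂ F Ω := hFdiff.analyticOnNhd hopen
  have hGan : AnalyticOnNhd ℂ G Ω := hGdiff.analyticOnNhd hopen
  -- F and G agree with the real formulas at real points
  have hFreal : ∀ y : ℝ, F (y:ℂ) =
      (((∑' k : ℕ, (1/(k.factorial:ℝ)) * y^k * (α+β*k)^(k+1) * Real.exp (-((α+β*k)*y))) : ℝ) : ℂ) := by
    intro y
    rw [hFdef]
    simp only [Complex.ofReal_tsum]
    apply tsum_congr
    intro k
    rw [hgdef]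
    push_cast
    ring
  have hGreal : ∀ y : ℝ, (1-β*y) ≠ 0 →
      G (y:ℂ) = (((α/(1-β*y)^2 + β^2*y/(1-β*y)^3) : ℝ) : ℂ) := by
    intro y _
    rw [hGdef]
    push_cast
    ring
  -- small positive reals where the explicit computation applies
  set ε : ℝ := min δ (1/(4*Real.exp 1)) with hεdef
  have hε : 0 < ε := lt_min hδ (by positivity)
  have hsmall : ∀ y : ℝ, 0 < y → y < ε → F (y:ℂ) = G (y:ℂ) := by
    intro y hy0 hyε
    have hyδ : y < δ := lt_of_lt_of_le hyε (min_le_left _ _)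
    have hye : y < 1/(4*Real.exp 1) := lt_of_lt_of_le hyε (min_le_right _ _)
    have h2e : 2 * Real.exp 1 * y < 1 := by
      have h4 : 4*Real.exp 1 > 0 := by positivity
      rw [lt_div_iff₀ h4] at hye
      nlinarith [Real.exp_pos 1]
    have hy1 : y < 1 := by nlinarith [Real.exp_pos 1]
    have h1t : 1 - β*y ≠ 0 := by nlinarith
    rw [hFreal y, hGreal y h1t]
    congr 1
    exact small_x_identity α β hα hβ.le hβ1.le hy0 h2e
  -- accumulation point
  set z₀ : ℂ := ((ε/2 : ℝ) : ℂ) with hz₀def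
  have hz₀Ω : z₀ ∈ Ω := by
    refine ⟨?_, ?_, ?_⟩
    · simp [hz₀def]; positivity
    · simp only [hz₀def, Complex.ofReal_re]
      have : ε ≤ δ := min_le_left _ _
      linarith
    · simp [hz₀def]; exact hδ
  have hfreq : ∃ᶠ z in nhdsWithin z₀ {z₀}ᶜ, F z = G z := by
    set w : ℕ → ℂ := fun j => ((ε/2*(1 - 1/(j+2)) : ℝ) : ℂ) with hwdef
    have hr : ∀ j : ℕ, 0 < ε/2*(1 - 1/((j:ℝ)+2)) ∧ ε/2*(1 - 1/((j:ℝ)+2)) < ε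
        ∧ ε/2*(1 - 1/((j:ℝ)+2)) ≠ ε/2 := by
      intro j
      have hj2 : (0:ℝ) < (j:ℝ)+2 := by positivity
      have h1 : 1/((j:ℝ)+2) ≤ 1/2 := by
        apply div_le_div_of_nonneg_left (by norm_num) (by norm_num)
        have : (0:ℝ) ≤ (j:ℝ) := Nat.cast_nonneg j
        linarith
      have h2 : 0 < 1/((j:ℝ)+2) := by positivity
      refine ⟨by nlinarith, by nlinarith, ?_⟩
      intro h
      have : ε/2 * (1/((j:ℝ)+2)) = 0 := by nlinarith
      have : (1:ℝ)/((j:ℝ)+2) = 0 := by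
        rcases mul_eq_zero.mp this with h' | h'
        · exfalso; nlinarith
        · exact h'
      nlinarith
    have htend : Tendsto w atTop (nhdsWithin z₀ {z₀}ᶜ) := by
      apply tendsto_nhdsWithin_of_tendsto_nhds_of_eventually_within
      · rw [hwdef, hz₀def]
        apply Tendsto.comp (Complex.continuous_ofReal.tendsto _)
        have h0 : Tendsto (fun j : ℕ => 1/((j:ℝ)+2)) atTop (nhds 0) := by
          simp only [one_div]
          exact tendsto_inv_atTop_zero.comp
            (tendsto_atTop_add_const_right atTop 2 tendsto_natCast_atTop_atTop)
        have := (tendsto_const_nhds (x := (1:ℝ)) (f := atTop)).sub h0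
        have h2 := (tendsto_const_nhds (x := ε/2) (f := (atTop : Filter ℕ))).mul this
        simpa using h2
      · apply Eventually.of_forall
        intro j
        simp only [Set.mem_compl_iff, Set.mem_singleton_iff]
        intro h
        apply (hr j).2.2
        have h2 := congrArg Complex.re h
        simp only [hwdef, hz₀def, Complex.ofReal_re] at h2
        simpa [one_div] using h2
    apply htend.frequently
    apply Frequently.of_forall
    intro j
    exact hsmall _ (hr j).1 (hr j).2.1
  have hEq : Set.EqOn F G Ω :=
    hFan.eqOn_of_preconnected_of_frequently_eq hGan hconv.isPreconnected hz₀Ω hfreq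
  -- conclude at x₀
  have hx₀Ω : ((x₀:ℝ):ℂ) ∈ Ω := by
    refine ⟨by simpa using hx₀, ?_, by simpa using hδ⟩
    simp only [Complex.ofReal_re]
    linarith
  have hfin := hEq hx₀Ω
  have h1t : 1 - β*x₀ ≠ 0 := by nlinarith
  rw [hFreal x₀, hGreal x₀ h1t] at hfin
  exact_mod_cast hfin

theorem SJ_two (a β α : ℝ) (ha₁ : 1 < a) (ha₂ : a ≤ Real.exp 1)
    (hβ₀ : 0 ≤ β) (hβ₁ : β < 1) (hα : 0 < α) :
    SJ 2 α β a =
      α / (1 - β * Real.log a) ^ 2 + β ^ 2 * Real.log a / (1 - β * Real.log a) ^ 3 := by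
  set x : ℝ := Real.log a with hxdef
  have hx₀ : 0 < x := Real.log_pos ha₁
  have ha0 : (0:ℝ) < a := lt_trans one_pos ha₁
  have hx₁ : x ≤ 1 := by
    have h := Real.log_le_log ha0 ha₂
    rwa [Real.log_exp] at h
  have hconv : SJ 2 α β a = ∑' k : ℕ,
      (1/(k.factorial:ℝ)) * x^k * (α+β*k)^(k+1) * Real.exp (-((α+β*k)*x)) := by
    unfold SJ
    apply tsum_congr
    intro k
    have h1 : ((k:ℤ) + ((2:ℕ):ℤ) - 1 : ℤ) = ((k+1 : ℕ) : ℤ) := by push_cast; ring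
    rw [h1, zpow_natCast, Real.rpow_def_of_pos ha0]
    rw [show Real.log a * -(α+β*(k:ℝ)) = -((α+β*(k:ℝ))*x) from by rw [← hxdef]; ring]
  rcases eq_or_lt_of_le hβ₀ with hβ0 | hβpos
  · -- β = 0
    rw [hconv, ← hβ0]
    norm_num
    have hterm : ∀ k : ℕ, ((k.factorial:ℝ))⁻¹*x^k*α^(k+1)*Real.exp (-(α*x))
        = (α*Real.exp (-(α*x))) * ((α*x)^k/(k.factorial:ℝ)) := by
      intro k
      rw [mul_pow, pow_succ]
      ring
    rw [tsum_congr hterm, tsum_mul_left, ← real_exp_tsum, mul_assoc, ← Real.exp_add]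
    simp
  · rw [hconv, main_pos α β hα hβpos hβ₁ x hx₀ hx₁]
end
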